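/- arXiv:2508.17111 — 12 statements merged into one kernel-verified Lean document; each statement's English description precedes it below -/
import Mathlib

section
/- For every integer n ≥ 3, the function J̃ is strictly increasing and strictly concave on [0, v̄]; more precisely, for every v ∈ [0, v̄] its derivative equals J̃'(v) = (1/v̄) · Σ_{m=1}^{n−1} [(n−1)!/((n−1−m)!·(m−1)!)] · (ln(m+ω₀) − ln(m−1+ω₀)) · (v/v̄)^{m−1} · (1 − v/v̄)^{n−1−m}, which is strictly positive, and its second derivative satisfies J̃''(v) < 0. -/
open Real Finset

/-- The expected social-network benefit at threshold `v`, when each user's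
valuation is uniform on `[0, vbar]` among `n` users with intrinsic constant `ω₀`:
`J̃(v) = Σ_{m=0}^{n−1} C(n−1,m) · ln(m+ω₀) · (v/v̄)^m · (1 − v/v̄)^{n−1−m}`. -/
noncomputable def Jt (n : ℕ) (ω₀ vbar : ℝ) (v : ℝ) : ℝ :=
  ∑ m ∈ Finset.range n, (Nat.choose (n - 1) m : ℝ) * Real.log ((m : ℝ) + ω₀) *
    (v / vbar) ^ m * (1 - v / vbar) ^ (n - 1 - m)


noncomputable def Bern (k : ℕ) (g : ℕ → ℝ) (x : ℝ) : ℝ :=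
  ∑ m ∈ Finset.range (k+1), (k.choose m : ℝ) * g m * x ^ m * (1-x) ^ (k-m)

lemma bern_hasDerivAt (k : ℕ) (g : ℕ → ℝ) (x : ℝ) :
    HasDerivAt (Bern (k+1) g)
      (((k:ℝ)+1) * Bern k (fun m => g (m+1) - g m) x) x := by
  have hterm : ∀ m ∈ Finset.range (k+2),
      HasDerivAt (fun y : ℝ => ((k+1).choose m : ℝ) * g m * y ^ m * (1-y) ^ (k+1-m))
        (((k+1).choose m : ℝ) * g m *
          ((m : ℝ) * x ^ (m-1) * (1-x) ^ (k+1-m)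
            - ((k+1-m : ℕ) : ℝ) * x ^ m * (1-x) ^ (k+1-m-1))) x := by
    intro m hm
    have h1 : HasDerivAt (fun y : ℝ => y ^ m) ((m:ℝ) * x ^ (m-1)) x := hasDerivAt_pow m x
    have h2 : HasDerivAt (fun y : ℝ => (1-y) ^ (k+1-m))
        ((((k+1-m : ℕ):ℝ) * (1-x) ^ (k+1-m-1)) * (-1)) x :=
      (hasDerivAt_pow (k+1-m) (1-x)).comp x ((hasDerivAt_id x).const_sub 1)
    have h3 := (h1.mul h2).const_mul (((k+1).choose m : ℝ) * g m)
    simp only [Pi.mul_apply, ← mul_assoc] at h3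
    exact h3.congr_deriv (by ring)
  have hsum := HasDerivAt.fun_sum hterm
  have hJ : (fun y : ℝ => ∑ m ∈ Finset.range (k+2),
        ((k+1).choose m : ℝ) * g m * y ^ m * (1-y) ^ (k+1-m)) = Bern (k+1) g := rfl
  rw [hJ] at hsum
  refine hsum.congr_deriv ?_
  have hsplit : ∑ m ∈ Finset.range (k+2),
      ((k+1).choose m : ℝ) * g m *
        ((m : ℝ) * x ^ (m-1) * (1-x) ^ (k+1-m)
          - ((k+1-m : ℕ) : ℝ) * x ^ m * (1-x) ^ (k+1-m-1))
      = (∑ m ∈ Finset.range (k+2), ((k+1).choose m : ℝ) * g m * (m : ℝ) * x ^ (m-1) * (1-x) ^ (k+1-m))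
        - (∑ m ∈ Finset.range (k+2), ((k+1).choose m : ℝ) * g m * ((k+1-m : ℕ) : ℝ) * x ^ m * (1-x) ^ (k+1-m-1)) := by
    rw [← Finset.sum_sub_distrib]
    exact Finset.sum_congr rfl fun m _ => by ring
  have hA : ∑ m ∈ Finset.range (k+2), ((k+1).choose m : ℝ) * g m * (m : ℝ) * x ^ (m-1) * (1-x) ^ (k+1-m)
      = ∑ m ∈ Finset.range (k+1), ((k:ℝ)+1) * (k.choose m : ℝ) * g (m+1) * x ^ m * (1-x) ^ (k-m) := by
    rw [Finset.sum_range_succ']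
    simp only [Nat.cast_zero, mul_zero, zero_mul, add_zero, Nat.add_sub_cancel]
    refine Finset.sum_congr rfl fun m hm => ?_
    have hnat : (k+1).choose (m+1) * (m+1) = (k+1) * k.choose m := (Nat.add_one_mul_choose_eq k m).symm
    have hc : ((k+1).choose (m+1) : ℝ) * ((m:ℝ)+1) = ((k:ℝ)+1) * (k.choose m : ℝ) := by
      exact_mod_cast congrArg (Nat.cast : ℕ → ℝ) hnat
    have he : k + 1 - (m + 1) = k - m := by omega
    rw [he]
    push_cast
    linear_combination (g (m+1) * x ^ m * (1-x) ^ (k-m)) * hc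
  have hB : ∑ m ∈ Finset.range (k+2), ((k+1).choose m : ℝ) * g m * ((k+1-m : ℕ) : ℝ) * x ^ m * (1-x) ^ (k+1-m-1)
      = ∑ m ∈ Finset.range (k+1), ((k:ℝ)+1) * (k.choose m : ℝ) * g m * x ^ m * (1-x) ^ (k-m) := by
    rw [Finset.sum_range_succ]
    simp only [Nat.sub_self, Nat.cast_zero, mul_zero, zero_mul, add_zero]
    refine Finset.sum_congr rfl fun m hm => ?_
    have hm' : m ≤ k := by simpa [Nat.lt_succ_iff] using hm
    have hnat : (k+1).choose m * (k+1-m) = (k+1) * k.choose m := by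
      have h1 := Nat.choose_succ_right_eq (k+1) m
      have h2 := Nat.add_one_mul_choose_eq k m
      rw [← h1, ← h2]
    have hc : ((k+1).choose m : ℝ) * ((k+1-m : ℕ) : ℝ) = ((k:ℝ)+1) * (k.choose m : ℝ) := by
      exact_mod_cast congrArg (Nat.cast : ℕ → ℝ) hnat
    have he : k + 1 - m - 1 = k - m := by omega
    rw [he]
    linear_combination (g m * x ^ m * (1-x) ^ (k-m)) * hc
  rw [hsplit, hA, hB, ← Finset.sum_sub_distrib, Bern, Finset.mul_sum]
  exact Finset.sum_congr rfl fun m _ => by ring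

lemma bern_weight_sum (k : ℕ) (x : ℝ) :
    ∑ m ∈ Finset.range (k+1), (k.choose m : ℝ) * x ^ m * (1-x) ^ (k-m) = 1 := by
  have h := add_pow x (1-x) k
  have h2 : (x + (1-x)) = (1:ℝ) := by ring
  rw [h2, one_pow] at h
  calc ∑ m ∈ Finset.range (k+1), (k.choose m : ℝ) * x ^ m * (1-x) ^ (k-m)
      = ∑ m ∈ Finset.range (k+1), x ^ m * (1-x) ^ (k-m) * (k.choose m : ℝ) :=
        Finset.sum_congr rfl fun m _ => by ring
    _ = 1 := h.symm

lemma bern_lower {k : ℕ} {g : ℕ → ℝ} {x c : ℝ} (hx : x ∈ Set.Icc (0:ℝ) 1)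
    (hg : ∀ m, m ≤ k → c ≤ g m) : c ≤ Bern k g x := by
  obtain ⟨hx0, hx1⟩ := hx
  have hw : ∀ m, 0 ≤ (k.choose m : ℝ) * x ^ m * (1-x) ^ (k-m) := fun m =>
    mul_nonneg (mul_nonneg (Nat.cast_nonneg _) (pow_nonneg hx0 m)) (pow_nonneg (by linarith) _)
  calc c = ∑ m ∈ Finset.range (k+1), c * ((k.choose m : ℝ) * x ^ m * (1-x) ^ (k-m)) := by
        rw [← Finset.mul_sum, bern_weight_sum, mul_one]
    _ ≤ Bern k g x := by
        refine Finset.sum_le_sum fun m hm => ?_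
        have hgm := hg m (by simpa [Nat.lt_succ_iff] using hm)
        calc c * ((k.choose m : ℝ) * x ^ m * (1-x) ^ (k-m))
            ≤ g m * ((k.choose m : ℝ) * x ^ m * (1-x) ^ (k-m)) :=
              mul_le_mul_of_nonneg_right hgm (hw m)
          _ = (k.choose m : ℝ) * g m * x ^ m * (1-x) ^ (k-m) := by ring

lemma bern_pos {k : ℕ} {g : ℕ → ℝ} {x : ℝ} (hx : x ∈ Set.Icc (0:ℝ) 1)
    (hg : ∀ m, m ≤ k → 0 < g m) : 0 < Bern k g x := by
  set s := (Finset.range (k+1)).image g with hs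
  have hne : s.Nonempty := (Finset.nonempty_range_iff.mpr (Nat.succ_ne_zero k)).image g
  obtain ⟨m, hm, hgm⟩ := Finset.mem_image.mp (s.min'_mem hne)
  have hcpos : 0 < s.min' hne := by
    rw [← hgm]; exact hg m (by simpa [Nat.lt_succ_iff] using hm)
  have hle : s.min' hne ≤ Bern k g x := bern_lower hx fun m hm =>
    Finset.min'_le s _ (Finset.mem_image_of_mem g (Finset.mem_range.mpr (Nat.lt_succ_of_le hm)))
  linarith

lemma bern_neg {k : ℕ} {g : ℕ → ℝ} {x : ℝ} (hx : x ∈ Set.Icc (0:ℝ) 1)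
    (hg : ∀ m, m ≤ k → g m < 0) : Bern k g x < 0 := by
  have hpos : 0 < Bern k (fun m => -(g m)) x := bern_pos hx fun m hm => neg_pos.mpr (hg m hm)
  have heq : Bern k (fun m => -(g m)) x = - Bern k g x := by
    simp only [Bern, ← Finset.sum_neg_distrib]
    exact Finset.sum_congr rfl fun m _ => by ring
  rw [heq] at hpos
  linarith

/-- For `n ≥ 3`, `J̃` is strictly increasing and strictly concave on `[0, v̄]`;
its derivative equals the displayed sum formula, which is strictly positive,
and its second derivative is strictly negative on `[0, v̄]`. -/

theorem stmt0 (n : ℕ) (hn : 3 ≤ n) (ω₀ vbar : ℝ) (hω : 1 < ω₀) (hv : 0 < vbar) :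
    StrictMonoOn (Jt n ω₀ vbar) (Set.Icc 0 vbar) ∧
    StrictConcaveOn ℝ (Set.Icc 0 vbar) (Jt n ω₀ vbar) ∧
    ∀ v ∈ Set.Icc (0 : ℝ) vbar,
      (deriv (Jt n ω₀ vbar) v =
        (1 / vbar) * ∑ m ∈ Finset.Icc 1 (n - 1),
          ((Nat.factorial (n - 1) / (Nat.factorial (n - 1 - m) * Nat.factorial (m - 1)) : ℕ) : ℝ) *
            (Real.log ((m : ℝ) + ω₀) - Real.log ((m : ℝ) - 1 + ω₀)) *
            (v / vbar) ^ (m - 1) * (1 - v / vbar) ^ (n - 1 - m)) ∧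
      0 < deriv (Jt n ω₀ vbar) v ∧
      deriv (deriv (Jt n ω₀ vbar)) v < 0 := by
  obtain ⟨k, rfl⟩ : ∃ k, n = k + 3 := ⟨n - 3, by omega⟩
  set g : ℕ → ℝ := fun m => Real.log ((m : ℝ) + ω₀) with hg
  set Dg : ℕ → ℝ := fun m => g (m+1) - g m with hDg
  set DDg : ℕ → ℝ := fun m => Dg (m+1) - Dg m with hDDg
  -- positivity of ω-shifted args
  have harg : ∀ m : ℕ, (0:ℝ) < (m:ℝ) + ω₀ := fun m => by
    have : (0:ℝ) ≤ (m:ℝ) := Nat.cast_nonneg m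
    linarith
  have hDgpos : ∀ m : ℕ, 0 < Dg m := by
    intro m
    have := Real.log_lt_log (harg m) (by push_cast; linarith : ((m:ℝ)+ω₀) < ((m+1:ℕ):ℝ)+ω₀)
    simpa [hDg, hg] using this
  have hDDgneg : ∀ m : ℕ, DDg m < 0 := by
    intro m
    have hlt : Real.log (((m+2:ℕ):ℝ)+ω₀) + Real.log ((m:ℝ)+ω₀) < 2 * Real.log (((m+1:ℕ):ℝ)+ω₀) := by
      rw [← Real.log_mul (by positivity) (ne_of_gt (harg m)),
        show (2 : ℝ) * Real.log (((m+1:ℕ):ℝ)+ω₀) = Real.log ((((m+1:ℕ):ℝ)+ω₀)^2) by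
          rw [Real.log_pow]; push_cast; ring]
      apply Real.log_lt_log
      · positivity
      · push_cast; nlinarith [harg m]
    simp only [hDDg, hDg, hg]
    push_cast at hlt ⊢
    ring_nf at hlt ⊢
    linarith
  -- Jt as a Bernstein polynomial
  have hJt : Jt (k+3) ω₀ vbar = fun v => Bern (k+2) g (v/vbar) := by
    funext v
    simp only [Jt, Bern, hg]
    norm_num
  -- first derivative
  have h0 : ∀ v : ℝ, HasDerivAt (fun v : ℝ => v / vbar) vbar⁻¹ v := by
    intro v
    simpa using (hasDerivAt_id v).div_const vbar
  have hd1 : ∀ v : ℝ, HasDerivAt (Jt (k+3) ω₀ vbar)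
      (vbar⁻¹ * (((k:ℝ)+2) * Bern (k+1) Dg (v/vbar))) v := by
    intro v
    have h1 := (bern_hasDerivAt (k+1) g (v/vbar)).comp v (h0 v)
    rw [← hDg] at h1
    rw [hJt]
    refine h1.congr_deriv ?_
    push_cast
    ring
  have hderiv1 : deriv (Jt (k+3) ω₀ vbar)
      = fun v => vbar⁻¹ * (((k:ℝ)+2) * Bern (k+1) Dg (v/vbar)) :=
    funext fun v => (hd1 v).deriv
  -- second derivative
  have hd2 : ∀ v : ℝ, HasDerivAt (deriv (Jt (k+3) ω₀ vbar))
      (vbar⁻¹ * (((k:ℝ)+2) * (vbar⁻¹ * (((k:ℝ)+1) * Bern k DDg (v/vbar))))) v := by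
    intro v
    rw [hderiv1]
    have h1 := ((bern_hasDerivAt k Dg (v/vbar)).comp v (h0 v)).const_mul (vbar⁻¹ * (((k:ℝ)+2)))
    rw [← hDDg] at h1
    rw [show (fun v => vbar⁻¹ * (((k:ℝ)+2) * Bern (k+1) Dg (v/vbar))) = fun y => vbar⁻¹ * ((k:ℝ)+2) * (Bern (k+1) Dg ∘ fun v => v / vbar) y from by
      funext y; simp only [Function.comp_apply, Function.comp_def]; ring]
    exact h1.congr_deriv (by ring)
  -- x in [0,1]
  have hxmem : ∀ v ∈ Set.Icc (0:ℝ) vbar, v / vbar ∈ Set.Icc (0:ℝ) 1 := by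
    rintro v ⟨h1, h2⟩
    exact ⟨div_nonneg h1 hv.le, (div_le_one hv).mpr h2⟩
  have hpos1 : ∀ v ∈ Set.Icc (0:ℝ) vbar, 0 < deriv (Jt (k+3) ω₀ vbar) v := by
    intro v hvm
    rw [hderiv1]
    have hb := bern_pos (k := k+1) (hxmem v hvm) (fun m _ => hDgpos m)
    have : (0:ℝ) < vbar⁻¹ := inv_pos.mpr hv
    positivity
  have hneg2 : ∀ v ∈ Set.Icc (0:ℝ) vbar, deriv (deriv (Jt (k+3) ω₀ vbar)) v < 0 := by
    intro v hvm
    rw [(hd2 v).deriv]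
    have hb := bern_neg (k := k) (hxmem v hvm) (fun m _ => hDDgneg m)
    have hi : (0:ℝ) < vbar⁻¹ := inv_pos.mpr hv
    have h2 : (0:ℝ) < (k:ℝ)+2 := by positivity
    have h1 : (0:ℝ) < (k:ℝ)+1 := by positivity
    exact mul_neg_of_pos_of_neg hi (mul_neg_of_pos_of_neg h2
      (mul_neg_of_pos_of_neg hi (mul_neg_of_pos_of_neg h1 hb)))
  have hdiff : Differentiable ℝ (Jt (k+3) ω₀ vbar) := fun v => (hd1 v).differentiableAt
  have hcont : ContinuousOn (Jt (k+3) ω₀ vbar) (Set.Icc 0 vbar) :=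
    hdiff.continuous.continuousOn
  refine ⟨?_, ?_, ?_⟩
  · refine strictMonoOn_of_deriv_pos (convex_Icc 0 vbar) hcont fun x hx => ?_
    rw [interior_Icc] at hx
    exact hpos1 x ⟨hx.1.le, hx.2.le⟩
  · refine strictConcaveOn_of_deriv2_neg (convex_Icc 0 vbar) hcont fun x hx => ?_
    rw [interior_Icc] at hx
    have h := hneg2 x ⟨hx.1.le, hx.2.le⟩
    simpa [Function.iterate_succ, Function.comp] using h
  · intro v hvm
    refine ⟨?_, hpos1 v hvm, hneg2 v hvm⟩
    rw [hderiv1]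
    have hre : (k+3-1 : ℕ) = k+2 := rfl
    rw [hre]
    rw [show (Finset.Icc 1 (k+2)) = Finset.Icc 1 ((k+2)) from rfl,
      ← Finset.Ico_add_one_right_eq_Icc, Finset.sum_Ico_eq_sum_range]
    have hre2 : k + 2 + 1 - 1 = k + 2 := rfl
    rw [hre2]
    simp only [Bern, Finset.mul_sum]
    refine Finset.sum_congr rfl fun j hj => ?_
    have hj' : j ≤ k + 1 := by simpa [Nat.lt_succ_iff] using Finset.mem_range.mp hj
    have hfac : (k+2).factorial / ((k+1-j).factorial * j.factorial) = (k+2) * (k+1).choose j := by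
      refine Nat.div_eq_of_eq_mul_left (Nat.mul_pos (Nat.factorial_pos _) (Nat.factorial_pos _)) ?_
      have h := Nat.choose_mul_factorial_mul_factorial hj'
      calc (k+2).factorial = (k+2) * (k+1).factorial := Nat.factorial_succ (k+1)
        _ = (k+2) * ((k+1).choose j * j.factorial * (k+1-j).factorial) := by rw [h]
        _ = (k+2) * (k+1).choose j * ((k+1-j).factorial * j.factorial) := by ring
    have he1 : k + 2 - (1 + j) = k + 1 - j := by omega
    have he2 : 1 + j - 1 = j := by omega
    rw [he1, he2]
    simp only [hDg, hg]
    rw [hfac]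
    push_cast
    rw [show (1:ℝ) + (j:ℝ) - 1 + ω₀ = (j:ℝ) + ω₀ by ring,
      show (1:ℝ) + (j:ℝ) + ω₀ = (j:ℝ) + 1 + ω₀ by ring]
    ring
end

section
/- Let δ ∈ (0,1), v̄ > 0 and v* ∈ [0, v̄] (so that δ·v* < v̄), and define the seller's expected non-profiled revenue per user R : [0, v̄] → ℝ by R(p) = p·(1 − (1−δ)·p/(v̄ − δ·v*)) if p ≤ v*, and R(p) = p·(v̄ − p)/(v̄ − δ·v*) if p > v*. Then R attains its maximum over [0, v̄] at the point p₀* given by: p₀* = v̄/2 if v* ≤ v̄/2; p₀* = v* if v̄/2 < v* ≤ v̄/(2−δ); and p₀* = (v̄ − δ·v*)/(2(1−δ)) if v̄/(2−δ) < v* ≤ v̄. -/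
open Real Set

/-- The seller's expected non-profiled revenue per user `R(p)` (piecewise in the
uniform price `p`, given profiling accuracy `δ` and users' valuation threshold `v*`)
attains its maximum over `[0, v̄]` at the piecewise-defined uniform price `p₀*`. -/
theorem stmt1 (δ vbar vstar : ℝ) (hδ : δ ∈ Set.Ioo (0 : ℝ) 1) (hv : 0 < vbar)
    (hvs : vstar ∈ Set.Icc (0 : ℝ) vbar) :
    (if vstar ≤ vbar / 2 then vbar / 2
     else if vstar ≤ vbar / (2 - δ) then vstar
     else (vbar - δ * vstar) / (2 * (1 - δ))) ∈ Set.Icc (0 : ℝ) vbar ∧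
    IsMaxOn
      (fun p => if p ≤ vstar then p * (1 - (1 - δ) * p / (vbar - δ * vstar))
                else p * (vbar - p) / (vbar - δ * vstar))
      (Set.Icc 0 vbar)
      (if vstar ≤ vbar / 2 then vbar / 2
       else if vstar ≤ vbar / (2 - δ) then vstar
       else (vbar - δ * vstar) / (2 * (1 - δ))) := by
  obtain ⟨hδ0, hδ1⟩ := hδ
  obtain ⟨hvs0, hvs1⟩ := hvs
  have h1δ : (0:ℝ) < 1 - δ := by linarith
  have hD : 0 < vbar - δ * vstar := by nlinarith
  have hDne : vbar - δ * vstar ≠ 0 := ne_of_gt hD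
  have hrew : ∀ q : ℝ, q * (1 - (1 - δ) * q / (vbar - δ * vstar)) =
      (q * (vbar - δ * vstar) - (1 - δ) * q ^ 2) / (vbar - δ * vstar) := by
    intro q; field_simp
  by_cases h1 : vstar ≤ vbar / 2
  · simp only [if_pos h1]
    refine ⟨⟨by linarith, by linarith⟩, ?_⟩
    rw [isMaxOn_iff]
    intro p hp
    obtain ⟨hp0, hp1⟩ := hp
    split_ifs with hA hB hB
    · have hveq : vstar = vbar / 2 := le_antisymm h1 hB
      subst hveq
      rw [hrew p, hrew (vbar/2), div_le_div_iff₀ hD hD]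
      nlinarith [mul_nonneg (sub_nonneg.2 hA)
        (by nlinarith [mul_nonneg hδ0.le hp0] :
          (0:ℝ) ≤ (vbar - δ * (vbar/2)) - (1 - δ) * (vbar/2 + p)),
        sq_nonneg (vbar - 2*p)]
    · rw [hrew p, div_le_div_iff₀ hD hD]
      nlinarith [sq_nonneg (vbar - 2*p), mul_nonneg (mul_nonneg hδ0.le hp0) (sub_nonneg.2 hA)]
    · have hveq : vstar = vbar / 2 := le_antisymm h1 hB
      subst hveq
      rw [hrew (vbar/2), div_le_div_iff₀ hD hD]
      nlinarith [mul_nonneg (sq_nonneg (vbar - 2*p))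
        (by nlinarith : (0:ℝ) ≤ vbar - δ * (vbar/2))]
    · rw [div_le_div_iff₀ hD hD]
      nlinarith [sq_nonneg (vbar - 2*p)]
  · push_neg at h1
    by_cases h2 : vstar ≤ vbar / (2 - δ)
    · simp only [if_neg (not_le.2 h1), if_pos h2]
      have h2' : (2 - δ) * vstar ≤ vbar := by
        rw [le_div_iff₀ (by linarith : (0:ℝ) < 2 - δ)] at h2; linarith
      refine ⟨⟨hvs0, hvs1⟩, ?_⟩
      rw [isMaxOn_iff]
      intro p hp
      obtain ⟨hp0, hp1⟩ := hp
      rw [if_pos (le_refl vstar)]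
      split_ifs with hA
      · rw [hrew p, hrew vstar, div_le_div_iff₀ hD hD]
        nlinarith [mul_nonneg (sub_nonneg.2 hA)
          (by nlinarith : (0:ℝ) ≤ (vbar - δ * vstar) - (1 - δ) * (vstar + p))]
      · push_neg at hA
        rw [hrew vstar, div_le_div_iff₀ hD hD]
        nlinarith [mul_nonneg (sub_nonneg.2 hA.le) (by linarith : (0:ℝ) ≤ p + vstar - vbar)]
    · push_neg at h2
      simp only [if_neg (not_le.2 h1), if_neg (not_le.2 h2)]
      have h2' : vbar < (2 - δ) * vstar := by
        rw [div_lt_iff₀ (by linarith : (0:ℝ) < 2 - δ)] at h2; linarith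
      have hp1lt : (vbar - δ * vstar) / (2 * (1 - δ)) < vstar := by
        rw [div_lt_iff₀ (by linarith : (0:ℝ) < 2 * (1 - δ))]; nlinarith
      refine ⟨⟨by positivity, by linarith⟩, ?_⟩
      rw [isMaxOn_iff]
      intro p hp
      obtain ⟨hp0, hp1⟩ := hp
      rw [if_pos hp1lt.le]
      have hval : (vbar - δ * vstar) / (2 * (1 - δ)) *
            (1 - (1 - δ) * ((vbar - δ * vstar) / (2 * (1 - δ))) / (vbar - δ * vstar)) =
          (vbar - δ * vstar) / (4 * (1 - δ)) := by
        field_simp; ring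
      rw [hval]
      split_ifs with hA
      · rw [hrew p, div_le_div_iff₀ hD (by linarith : (0:ℝ) < 4 * (1 - δ))]
        nlinarith [sq_nonneg ((vbar - δ * vstar) - 2 * (1 - δ) * p)]
      · push_neg at hA
        rw [div_le_div_iff₀ hD (by linarith : (0:ℝ) < 4 * (1 - δ))]
        nlinarith [mul_nonneg (sub_nonneg.2 hA.le) (by nlinarith : (0:ℝ) ≤ p + vstar - vbar),
          sq_nonneg ((vbar - δ * vstar) - 2 * (1 - δ) * vstar), hD.le]
end

section
/- Let n ≥ 3 be an integer, ω₀ > 1, δ ∈ (0,1) and v̄ > 2·ln(n−1+ω₀). Then the equation δ(2−δ)·v − 2(1−δ)·J̃(v) = δ·v̄ has a solution v in the open interval (v̄/(2−δ), v̄) if and only if δ·v̄ > 2·ln(n−1+ω₀); moreover, when δ·v̄ > 2·ln(n−1+ω₀) this solution is unique. -/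
open Real Finset

/-- Bernstein-type polynomial with coefficients `c`. -/
noncomputable def Bp (c : ℕ → ℝ) (N : ℕ) (x : ℝ) : ℝ :=
  ∑ m ∈ Finset.range (N+1), (Nat.choose N m : ℝ) * c m * x ^ m * (1 - x) ^ (N - m)

/-- Forward difference operator. -/
def dd (c : ℕ → ℝ) : ℕ → ℝ := fun m => c (m+1) - c m

/-- The coefficients `log (m + ω₀)`. -/
noncomputable def lc (ω₀ : ℝ) : ℕ → ℝ := fun m => Real.log ((m : ℝ) + ω₀)

lemma hasDerivAt_Bp (c : ℕ → ℝ) (N : ℕ) (x : ℝ) :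
    HasDerivAt (fun y => Bp c (N+1) y) (((N:ℝ)+1) * Bp (dd c) N x) x := by
  have key : ∀ m ∈ Finset.range (N+2),
      HasDerivAt (fun y : ℝ => (Nat.choose (N+1) m : ℝ) * c m * y ^ m * (1 - y) ^ (N+1-m))
        ((Nat.choose (N+1) m : ℝ) * c m * ((m : ℝ) * x ^ (m-1)) * (1-x) ^ (N+1-m)
          - (Nat.choose (N+1) m : ℝ) * c m * (((N+1-m : ℕ) : ℝ) * x ^ m) * (1-x) ^ (N-m)) x := by
    intro m _
    have h1 : HasDerivAt (fun y : ℝ => (Nat.choose (N+1) m : ℝ) * c m * y ^ m)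
        ((Nat.choose (N+1) m : ℝ) * c m * ((m:ℝ) * x ^ (m-1))) x :=
      (hasDerivAt_pow m x).const_mul _
    have h2 : HasDerivAt (fun y : ℝ => (1 - y) ^ (N+1-m))
        (-(((N+1-m : ℕ):ℝ) * (1-x) ^ (N-m))) x := by
      have h0 : HasDerivAt (fun y : ℝ => 1 - y) (-1) x := by
        simpa using (hasDerivAt_id x).const_sub 1
      have := h0.fun_pow (N+1-m)
      have he : N+1-m-1 = N-m := by omega
      rw [he] at this
      exact this.congr_deriv (by ring)
    have := h1.fun_mul h2
    exact this.congr_deriv (by ring)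
  have hsum := HasDerivAt.fun_sum key
  have hD : HasDerivAt (fun y => Bp c (N+1) y)
      (∑ m ∈ Finset.range (N+2),
        ((Nat.choose (N+1) m : ℝ) * c m * ((m : ℝ) * x ^ (m-1)) * (1-x) ^ (N+1-m)
          - (Nat.choose (N+1) m : ℝ) * c m * (((N+1-m : ℕ) : ℝ) * x ^ m) * (1-x) ^ (N-m))) x :=
    hsum
  convert hD using 1
  rw [Finset.sum_sub_distrib]
  have hS1 : ∑ m ∈ Finset.range (N+2),
      (Nat.choose (N+1) m : ℝ) * c m * ((m : ℝ) * x ^ (m-1)) * (1-x) ^ (N+1-m)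
      = ∑ m ∈ Finset.range (N+1),
        (((N:ℝ)+1) * (Nat.choose N m : ℝ)) * c (m+1) * x ^ m * (1-x) ^ (N-m) := by
    rw [Finset.sum_range_succ']
    simp only [Nat.cast_zero, zero_mul, mul_zero, add_zero]
    apply Finset.sum_congr rfl
    intro m hm
    have hc : ((N:ℝ)+1) * (Nat.choose N m : ℝ) = (Nat.choose (N+1) (m+1) : ℝ) * ((m:ℝ)+1) := by
      have := Nat.add_one_mul_choose_eq N m
      exact_mod_cast this
    have he1 : m + 1 - 1 = m := rfl
    have he2 : N + 1 - (m+1) = N - m := by omega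
    rw [he1, he2]
    push_cast
    linear_combination (-(c (m+1) * x ^ m * (1-x)^(N-m))) * hc
  have hS2 : ∑ m ∈ Finset.range (N+2),
      (Nat.choose (N+1) m : ℝ) * c m * (((N+1-m : ℕ) : ℝ) * x ^ m) * (1-x) ^ (N-m)
      = ∑ m ∈ Finset.range (N+1),
        (((N:ℝ)+1) * (Nat.choose N m : ℝ)) * c m * x ^ m * (1-x) ^ (N-m) := by
    rw [Finset.sum_range_succ]
    simp only [Nat.sub_self, Nat.cast_zero, zero_mul, mul_zero, add_zero]
    apply Finset.sum_congr rfl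
    intro m hm
    have hm' : m < N + 1 := Finset.mem_range.mp hm
    have hc : (Nat.choose (N+1) m : ℝ) * ((N+1-m : ℕ) : ℝ) = ((N:ℝ)+1) * (Nat.choose N m : ℝ) := by
      have h2 : (Nat.choose N m * (N+1) : ℕ) = (Nat.choose (N+1) m * (N+1-m) : ℕ) :=
        Nat.choose_mul_succ_eq N m
      have h3 := congrArg (Nat.cast (R := ℝ)) h2
      push_cast at h3
      linarith [h3]
    linear_combination (c m * x ^ m * (1-x)^(N-m)) * hc
  rw [hS1, hS2, ← Finset.sum_sub_distrib]
  unfold Bp dd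
  rw [Finset.mul_sum]
  apply Finset.sum_congr rfl
  intro m _
  ring

lemma Bp_pos {d : ℕ → ℝ} {N : ℕ} {x : ℝ} (hd : ∀ m, 0 < d m) (hx : x ∈ Set.Ioo (0:ℝ) 1) :
    0 < Bp d N x := by
  apply Finset.sum_pos _ (by simp)
  intro m hm
  have hm' : m ≤ N := by simp at hm; omega
  have hc : 0 < (Nat.choose N m : ℝ) := by exact_mod_cast Nat.choose_pos hm'
  have h1 : 0 < x ^ m := pow_pos hx.1 m
  have h2 : 0 < (1-x) ^ (N-m) := pow_pos (by linarith [hx.2]) _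
  have := hd m
  positivity

lemma Bp_neg {d : ℕ → ℝ} {N : ℕ} {x : ℝ} (hd : ∀ m, d m < 0) (hx : x ∈ Set.Ioo (0:ℝ) 1) :
    Bp d N x < 0 := by
  have h := Bp_pos (d := fun m => -(d m)) (N := N) (x := x)
    (fun m => by have := hd m; simp; linarith) hx
  have he : Bp (fun m => -(d m)) N x = - Bp d N x := by
    unfold Bp
    rw [← Finset.sum_neg_distrib]
    apply Finset.sum_congr rfl; intro m _; ring
  rw [he] at h; linarith

lemma log_second_diff_neg (p : ℝ) (hp : 0 < p) :
    Real.log (p+2) - Real.log (p+1) - (Real.log (p+1) - Real.log p) < 0 := by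
  have h := strictConcaveOn_log_Ioi.2 (Set.mem_Ioi.mpr hp)
      (Set.mem_Ioi.mpr (by linarith : (0:ℝ) < p + 2)) (by linarith)
      (by norm_num : (0:ℝ) < 1/2) (by norm_num : (0:ℝ) < 1/2) (by norm_num)
  have he : (1/2 : ℝ) • p + (1/2 : ℝ) • (p+2) = p + 1 := by
    simp [smul_eq_mul]; ring
  rw [he] at h
  simp only [smul_eq_mul] at h
  linarith

lemma dd_dd_lc_neg {ω₀ : ℝ} (hω : 0 < ω₀) (m : ℕ) : dd (dd (lc ω₀)) m < 0 := by
  have hp : (0:ℝ) < (m:ℝ) + ω₀ := by positivity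
  have h := log_second_diff_neg ((m:ℝ) + ω₀) hp
  simp only [dd, lc]
  push_cast
  have e1 : (m:ℝ) + 1 + 1 + ω₀ = ((m:ℝ)+ω₀) + 2 := by ring
  have e2 : (m:ℝ) + 1 + ω₀ = ((m:ℝ)+ω₀) + 1 := by ring
  rw [e1, e2]
  linarith

lemma lc_pos {ω₀ : ℝ} (hω : 1 < ω₀) (m : ℕ) : 0 < lc ω₀ m := by
  apply Real.log_pos
  have : (0:ℝ) ≤ m := Nat.cast_nonneg m
  linarith

lemma Bp_one (c : ℕ → ℝ) (N : ℕ) : Bp c N 1 = c N := by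
  unfold Bp
  rw [Finset.sum_eq_single_of_mem N (Finset.self_mem_range_succ N)]
  · simp
  · intro m hm hne
    have : N - m ≠ 0 := by simp at hm; omega
    simp [zero_pow this]

/-- The equilibrium map. -/
noncomputable def Ffun (ω₀ δ vbar : ℝ) (K : ℕ) : ℝ → ℝ := fun v =>
  δ * (2 - δ) * v - 2 * (1 - δ) * Bp (lc ω₀) (K+2) (v / vbar)

/-- Its derivative. -/
noncomputable def Gfun (ω₀ δ vbar : ℝ) (K : ℕ) : ℝ → ℝ := fun v =>
  δ * (2 - δ) - 2 * (1 - δ) * ((((K+1 : ℕ):ℝ)+1) * Bp (dd (lc ω₀)) (K+1) (v / vbar) * (1 / vbar))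

lemma hasDerivAt_Ffun (ω₀ δ vbar : ℝ) (K : ℕ) (x : ℝ) :
    HasDerivAt (Ffun ω₀ δ vbar K) (Gfun ω₀ δ vbar K x) x := by
  have hBd : HasDerivAt (fun v => Bp (lc ω₀) (K+2) (v / vbar))
      ((((K+1 : ℕ):ℝ)+1) * Bp (dd (lc ω₀)) (K+1) (x / vbar) * (1 / vbar)) x :=
    by have h := (hasDerivAt_Bp (lc ω₀) (K+1) (x / vbar)).comp x ((hasDerivAt_id x).div_const vbar); exact h
  have h1 : HasDerivAt (fun v : ℝ => δ * (2 - δ) * v) (δ * (2 - δ)) x := by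
    simpa using (hasDerivAt_id x).const_mul (δ * (2 - δ))
  exact h1.sub (hBd.const_mul (2 * (1 - δ)))

lemma hasDerivAt_Gfun (ω₀ δ vbar : ℝ) (K : ℕ) (x : ℝ) :
    HasDerivAt (Gfun ω₀ δ vbar K)
      (-(2 * (1 - δ) * ((((K+1 : ℕ):ℝ)+1) *
        ((((K : ℕ):ℝ)+1) * Bp (dd (dd (lc ω₀))) K (x / vbar) * (1 / vbar)) * (1 / vbar)))) x := by
  have hBd2 : HasDerivAt (fun v => Bp (dd (lc ω₀)) (K+1) (v / vbar))
      ((((K : ℕ):ℝ)+1) * Bp (dd (dd (lc ω₀))) K (x / vbar) * (1 / vbar)) x :=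
    by have h := (hasDerivAt_Bp (dd (lc ω₀)) K (x / vbar)).comp x ((hasDerivAt_id x).div_const vbar); exact h
  have h2 : HasDerivAt (fun v => (((K+1:ℕ):ℝ)+1) * Bp (dd (lc ω₀)) (K+1) (v / vbar) * (1/vbar))
      ((((K+1:ℕ):ℝ)+1) * ((((K:ℕ):ℝ)+1) * Bp (dd (dd (lc ω₀))) K (x / vbar) * (1 / vbar))
        * (1/vbar)) x :=
    ((hBd2.const_mul _).mul_const _)
  have h4 := (hasDerivAt_const x (δ * (2 - δ))).sub (h2.const_mul (2 * (1-δ)))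
  have hval : -(2 * (1 - δ) * ((((K+1 : ℕ):ℝ)+1) *
        ((((K : ℕ):ℝ)+1) * Bp (dd (dd (lc ω₀))) K (x / vbar) * (1 / vbar)) * (1 / vbar)))
      = 0 - 2 * (1-δ) * ((((K+1:ℕ):ℝ)+1) * ((((K:ℕ):ℝ)+1) * Bp (dd (dd (lc ω₀))) K (x / vbar)
        * (1 / vbar)) * (1/vbar)) := by ring
  rw [hval]
  exact h4

/-- The equilibrium equation `δ(2−δ)v − 2(1−δ)J̃(v) = δv̄` has a solution in
`(v̄/(2−δ), v̄)` iff `δ·v̄ > 2·ln(n−1+ω₀)`, and then the solution is unique. -/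
theorem stmt2 (n : ℕ) (hn : 3 ≤ n) (ω₀ δ vbar : ℝ) (hω : 1 < ω₀)
    (hδ : δ ∈ Set.Ioo (0 : ℝ) 1)
    (hv : 2 * Real.log ((n : ℝ) - 1 + ω₀) < vbar) :
    ((∃ v ∈ Set.Ioo (vbar / (2 - δ)) vbar,
        δ * (2 - δ) * v - 2 * (1 - δ) * Jt n ω₀ vbar v = δ * vbar) ↔
      2 * Real.log ((n : ℝ) - 1 + ω₀) < δ * vbar) ∧
    (2 * Real.log ((n : ℝ) - 1 + ω₀) < δ * vbar →
      ∃! v, v ∈ Set.Ioo (vbar / (2 - δ)) vbar ∧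
        δ * (2 - δ) * v - 2 * (1 - δ) * Jt n ω₀ vbar v = δ * vbar) := by
  obtain ⟨hδ0, hδ1⟩ := hδ
  obtain ⟨K, rfl⟩ : ∃ K, n = K + 3 := ⟨n - 3, by omega⟩
  clear hn
  have hrw : ∀ v, (δ * (2 - δ) * v - 2 * (1 - δ) * Jt (K+3) ω₀ vbar v)
      = Ffun ω₀ δ vbar K v := fun _ => rfl
  simp only [hrw]
  set F := Ffun ω₀ δ vbar K with hFdef
  set L : ℝ := Real.log (((K+3 : ℕ):ℝ) - 1 + ω₀) with hL
  have hLc : L = lc ω₀ (K+2) := by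
    rw [hL]; unfold lc; congr 1; push_cast; ring
  have hω0 : 0 < ω₀ := by linarith
  have hLpos : 0 < L := by
    rw [hL]; apply Real.log_pos; push_cast; linarith
  have hvb : 0 < vbar := by linarith
  have h2δ : (0:ℝ) < 2 - δ := by linarith
  set a : ℝ := vbar / (2 - δ) with ha
  have ha0 : 0 < a := by rw [ha]; positivity
  have hav : a < vbar := by rw [ha]; exact div_lt_self hvb (by linarith)
  -- continuity and convexity
  have hcont : Continuous F :=
    Differentiable.continuous (fun x => (hasDerivAt_Ffun ω₀ δ vbar K x).differentiableAt)
  have hderivF : deriv F = Gfun ω₀ δ vbar K :=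
    funext fun x => (hasDerivAt_Ffun ω₀ δ vbar K x).deriv
  have hF2 : ∀ x ∈ Set.Ioo a vbar, 0 < deriv^[2] F x := by
    intro x hx
    have hx01 : x / vbar ∈ Set.Ioo (0:ℝ) 1 :=
      ⟨div_pos (lt_trans ha0 hx.1) hvb, (div_lt_one hvb).mpr hx.2⟩
    have hB : Bp (dd (dd (lc ω₀))) K (x / vbar) < 0 := Bp_neg (dd_dd_lc_neg hω0) hx01
    have h2 : deriv^[2] F x = deriv (Gfun ω₀ δ vbar K) x := by
      rw [show deriv^[2] F = deriv (deriv F) from rfl, hderivF]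
    rw [h2, (hasDerivAt_Gfun ω₀ δ vbar K x).deriv]
    have hv1 : (0:ℝ) < 1 / vbar := by positivity
    have hK1 : (0:ℝ) < ((K:ℕ):ℝ) + 1 := by positivity
    have hK2 : (0:ℝ) < ((K+1:ℕ):ℝ) + 1 := by positivity
    have t1 : (((K:ℕ):ℝ)+1) * Bp (dd (dd (lc ω₀))) K (x / vbar) * (1 / vbar) < 0 :=
      mul_neg_of_neg_of_pos (mul_neg_of_pos_of_neg hK1 hB) hv1
    have t2 : (((K+1:ℕ):ℝ)+1) * ((((K:ℕ):ℝ)+1) * Bp (dd (dd (lc ω₀))) K (x / vbar) * (1 / vbar))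
        * (1 / vbar) < 0 := mul_neg_of_neg_of_pos (mul_neg_of_pos_of_neg hK2 t1) hv1
    nlinarith [t2, hδ1]
  have hconv : StrictConvexOn ℝ (Set.Icc a vbar) F := by
    apply strictConvexOn_of_deriv2_pos (convex_Icc a vbar) hcont.continuousOn
    intro x hx
    rw [interior_Icc] at hx
    exact hF2 x hx
  -- endpoint values
  have hxa : a / vbar ∈ Set.Ioo (0:ℝ) 1 := ⟨div_pos ha0 hvb, (div_lt_one hvb).mpr hav⟩
  have hBa : 0 < Bp (lc ω₀) (K+2) (a / vbar) := Bp_pos (lc_pos hω) hxa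
  have hFa : F a < δ * vbar := by
    have haa : δ * (2 - δ) * a = δ * vbar := by
      rw [ha]; field_simp
    have hFav : F a = δ * (2 - δ) * a - 2 * (1 - δ) * Bp (lc ω₀) (K+2) (a / vbar) := rfl
    rw [hFav, haa]
    nlinarith [hBa, hδ1]
  have hFv : F vbar = δ * (2 - δ) * vbar - 2 * (1 - δ) * L := by
    have h0 : F vbar = δ * (2 - δ) * vbar - 2 * (1 - δ) * Bp (lc ω₀) (K+2) (vbar / vbar) := rfl
    rw [h0, div_self hvb.ne', Bp_one, hLc]
  have hFv_iff : (δ * vbar < F vbar) ↔ 2 * L < δ * vbar := by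
    rw [hFv]
    constructor <;> intro h <;> nlinarith [hδ1, hδ0]
  -- convexity key lemma
  have key : ∀ v₁ v₂, v₁ ∈ Set.Ioo a vbar → v₂ ∈ Set.Icc a vbar → v₁ < v₂ →
      F v₂ ≤ δ * vbar → F v₁ < δ * vbar := by
    intro v₁ v₂ h1 h2 hlt he
    have hden : 0 < v₂ - a := by linarith [h1.1]
    set lam := (v₂ - v₁) / (v₂ - a) with hlam
    set mu := (v₁ - a) / (v₂ - a) with hmu
    have hl : 0 < lam := div_pos (by linarith) hden
    have hm : 0 < mu := div_pos (by linarith [h1.1]) hden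
    have hsum : lam + mu = 1 := by
      rw [hlam, hmu]; field_simp; ring
    have hcomb : lam • a + mu • v₂ = v₁ := by
      simp only [smul_eq_mul, hlam, hmu]
      field_simp
      ring
    have hmem1 : a ∈ Set.Icc a vbar := Set.left_mem_Icc.mpr hav.le
    have hne : a ≠ v₂ := by intro hc; rw [← hc] at hlt; linarith [h1.1]
    have hcc := hconv.2 hmem1 h2 hne hl hm hsum
    rw [hcomb] at hcc
    simp only [smul_eq_mul] at hcc
    have hsum' : lam * (δ * vbar) + mu * (δ * vbar) = δ * vbar := by
      rw [← add_mul, hsum, one_mul]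
    nlinarith [hcc, mul_pos hl (sub_pos.mpr hFa), mul_nonneg hm.le (sub_nonneg.mpr he), hsum']
  -- existence under the condition
  have hexist : 2 * L < δ * vbar → ∃ v ∈ Set.Ioo a vbar, F v = δ * vbar := by
    intro h
    have h2 : δ * vbar ∈ Set.Ioo (F a) (F vbar) := ⟨hFa, hFv_iff.mpr h⟩
    obtain ⟨v, hv1, hv2⟩ := intermediate_value_Ioo hav.le hcont.continuousOn h2
    exact ⟨v, hv1, hv2⟩
  have huniq : ∀ v₁ ∈ Set.Ioo a vbar, ∀ v₂ ∈ Set.Ioo a vbar,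
      F v₁ = δ * vbar → F v₂ = δ * vbar → v₁ = v₂ := by
    intro v₁ h1 v₂ h2 he1 he2
    rcases lt_trichotomy v₁ v₂ with h | h | h
    · exact absurd he1 (ne_of_lt (key v₁ v₂ h1 ⟨h2.1.le, h2.2.le⟩ h he2.le))
    · exact h
    · exact absurd he2 (ne_of_lt (key v₂ v₁ h2 ⟨h1.1.le, h1.2.le⟩ h he1.le))
  constructor
  · constructor
    · rintro ⟨v, hvm, hveq⟩
      by_contra hn2
      push_neg at hn2
      have hFvle : F vbar ≤ δ * vbar := by
        rw [hFv]; nlinarith [hδ1, hδ0]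
      exact absurd hveq (ne_of_lt
        (key v vbar hvm (Set.right_mem_Icc.mpr hav.le) hvm.2 hFvle))
    · intro h
      exact hexist h
  · intro h
    obtain ⟨v, hvm, hveq⟩ := hexist h
    refine ⟨v, ⟨hvm, hveq⟩, ?_⟩
    rintro y ⟨hym, hyeq⟩
    exact huniq y hym v hvm hyeq hveq
end

section
/- Let n ≥ 3 be an integer, ω₀ > 1, δ ∈ (0,1), and define Ĵ(a) = Σ_{m=0}^{n−1} binom(n−1, m) · ln(m+ω₀) · a^m · (1−a)^{n−1−m} for a ∈ [0,1]. Suppose v̄₁ < v̄₂ are reals with δ·v̄ᵢ > 2·ln(n−1+ω₀) for i = 1, 2, and let aᵢ ∈ (1/(2−δ), 1) be the unique solution of δ(2−δ)·a·v̄ᵢ − 2(1−δ)·Ĵ(a) = δ·v̄ᵢ. Then a₁ > a₂; that is, the equilibrium fraction of socially active users v*/v̄ strictly decreases as the maximum valuation v̄ increases. -/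
open Real Finset

/-- The expected social-network benefit when every other user is active
independently with probability `a`. -/
noncomputable def Jhat (n : ℕ) (ω₀ : ℝ) (a : ℝ) : ℝ :=
  ∑ m ∈ Finset.range n, (Nat.choose (n - 1) m : ℝ) * Real.log ((m : ℝ) + ω₀) *
    a ^ m * (1 - a) ^ (n - 1 - m)


noncomputable def Bsum (N : ℕ) (f : ℕ → ℝ) : Polynomial ℝ :=
  ∑ m ∈ Finset.range (N+1), Polynomial.C (f m) * bernsteinPolynomial ℝ N m

lemma Bsum_derivative (N : ℕ) (f : ℕ → ℝ) :
    (Bsum (N+1) f).derivative = Bsum N (fun m => ((N:ℝ)+1) * (f (m+1) - f m)) := by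
  unfold Bsum
  have key : ∑ m ∈ Finset.range (N+1), Polynomial.C (f (m+1)) * bernsteinPolynomial ℝ N (m+1)
      = (∑ m ∈ Finset.range (N+1), Polynomial.C (f m) * bernsteinPolynomial ℝ N m)
        - Polynomial.C (f 0) * bernsteinPolynomial ℝ N 0 := by
    rw [eq_sub_iff_add_eq,
      ← Finset.sum_range_succ' (fun m => Polynomial.C (f m) * bernsteinPolynomial ℝ N m) (N+1),
      Finset.sum_range_succ]
    simp [bernsteinPolynomial.eq_zero_of_lt ℝ (Nat.lt_succ_self N)]
  rw [Polynomial.derivative_sum, Finset.sum_range_succ'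
    (fun m => Polynomial.derivative (Polynomial.C (f m) * bernsteinPolynomial ℝ (N+1) m))]
  simp only [Polynomial.derivative_mul, Polynomial.derivative_C, zero_mul, zero_add,
    bernsteinPolynomial.derivative_succ, bernsteinPolynomial.derivative_zero,
    Nat.add_sub_cancel, Nat.cast_add, Nat.cast_one]
  have expand : ∀ m, Polynomial.C (f (m+1)) * ((((N:Polynomial ℝ))+1) *
      (bernsteinPolynomial ℝ N m - bernsteinPolynomial ℝ N (m+1)))
      = (((N:Polynomial ℝ))+1) * (Polynomial.C (f (m+1)) * bernsteinPolynomial ℝ N m)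
        - (((N:Polynomial ℝ))+1) * (Polynomial.C (f (m+1)) * bernsteinPolynomial ℝ N (m+1)) := by
    intro m; ring
  rw [Finset.sum_congr rfl (fun m _ => expand m), Finset.sum_sub_distrib, ← Finset.mul_sum,
    ← Finset.mul_sum, key]
  have expand2 : ∀ m : ℕ, Polynomial.C (((N:ℝ)+1) * (f (m+1) - f m)) * bernsteinPolynomial ℝ N m
      = (((N:Polynomial ℝ))+1) * ((Polynomial.C (f (m+1)) * bernsteinPolynomial ℝ N m)
          - Polynomial.C (f m) * bernsteinPolynomial ℝ N m) := by
    intro m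
    simp only [map_mul, map_sub, map_add, map_one, Polynomial.C_eq_natCast, map_natCast]
    ring
  rw [Finset.sum_congr rfl (fun m _ => expand2 m), ← Finset.mul_sum, Finset.sum_sub_distrib]
  ring

lemma Bsum_eval (N : ℕ) (f : ℕ → ℝ) (a : ℝ) :
    (Bsum N f).eval a = ∑ m ∈ Finset.range (N+1),
      f m * ((Nat.choose N m : ℝ) * a ^ m * (1 - a) ^ (N - m)) := by
  rw [Bsum, Polynomial.eval_finset_sum]
  refine Finset.sum_congr rfl fun m _ => ?_
  simp only [bernsteinPolynomial, Polynomial.eval_mul, Polynomial.eval_pow,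
    Polynomial.eval_sub, Polynomial.eval_one, Polynomial.eval_X, Polynomial.eval_natCast,
    Polynomial.eval_C]

lemma Jhat_eq_eval (K : ℕ) (ω₀ a : ℝ) :
    Jhat (K+3) ω₀ a = (Bsum (K+2) (fun m => Real.log ((m:ℝ) + ω₀))).eval a := by
  rw [Bsum_eval, Jhat]
  refine Finset.sum_congr rfl fun m _ => by push_cast; ring

lemma Jhat_nonneg (n : ℕ) (ω₀ a : ℝ) (hω : 1 ≤ ω₀) (ha : a ∈ Set.Icc (0:ℝ) 1) :
    0 ≤ Jhat n ω₀ a := by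
  refine Finset.sum_nonneg fun m _ => ?_
  have h1 : (0:ℝ) ≤ Real.log ((m:ℝ) + ω₀) :=
    Real.log_nonneg (by have : (0:ℝ) ≤ (m:ℝ) := Nat.cast_nonneg m; linarith)
  have h2 : (0:ℝ) ≤ a := ha.1
  have h3 : (0:ℝ) ≤ 1 - a := by have := ha.2; linarith
  have := Nat.cast_nonneg (α := ℝ) (Nat.choose (n-1) m)
  exact mul_nonneg (mul_nonneg (mul_nonneg this h1) (pow_nonneg h2 m)) (pow_nonneg h3 _)

lemma Jhat_concave (K : ℕ) (ω₀ : ℝ) (hω : 1 ≤ ω₀) :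
    ConcaveOn ℝ (Set.Icc (0:ℝ) 1) (fun a => Jhat (K+3) ω₀ a) := by
  set f : ℕ → ℝ := fun m => Real.log ((m:ℝ) + ω₀) with hf
  set P : Polynomial ℝ := Bsum (K+2) f with hP
  have hfun : (fun a => Jhat (K+3) ω₀ a) = fun x => P.eval x :=
    funext fun a => Jhat_eq_eval K ω₀ a
  rw [hfun]
  have hd1 : deriv (fun x => P.eval x) = fun x => (P.derivative).eval x :=
    funext fun x => Polynomial.deriv (p := P) (x := x)
  have hd2 : P.derivative.derivative
      = Bsum K (fun m => ((K:ℝ)+1) * (((K:ℝ)+2) * (f (m+2) - f (m+1))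
          - ((K:ℝ)+2) * (f (m+1) - f m))) := by
    have e1 : P.derivative = Bsum (K+1) (fun m => ((K:ℝ)+2) * (f (m+1) - f m)) := by
      rw [hP]
      rw [Bsum_derivative (K+1) f]
      congr 1
      funext m
      push_cast
      ring
    rw [e1, Bsum_derivative]
  apply concaveOn_of_deriv2_nonpos (convex_Icc 0 1)
  · exact (Polynomial.continuous P).continuousOn
  · exact (Polynomial.differentiable P).differentiableOn
  · rw [hd1]; exact (Polynomial.differentiable P.derivative).differentiableOn
  · intro x hx
    rw [interior_Icc] at hx
    have hx0 : 0 < x := hx.1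
    have hx1 : x < 1 := hx.2
    show deriv (deriv (fun x => P.eval x)) x ≤ 0
    rw [hd1, Polynomial.deriv, hd2, Bsum_eval]
    refine Finset.sum_nonpos fun m _ => ?_
    have hcoef : ((K:ℝ)+1) * (((K:ℝ)+2) * (f (m+2) - f (m+1))
        - ((K:ℝ)+2) * (f (m+1) - f m)) ≤ 0 := by
      have hm : (0:ℝ) < (m:ℝ) + ω₀ := by
        have : (0:ℝ) ≤ (m:ℝ) := Nat.cast_nonneg m; linarith
      have hlog : f (m+2) + f m ≤ 2 * f (m+1) := by
        have hprod : ((m:ℝ) + 2 + ω₀) * ((m:ℝ) + ω₀) ≤ ((m:ℝ) + 1 + ω₀)^2 := by nlinarith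
        have h1 : f (m+2) + f m = Real.log (((m:ℝ) + 2 + ω₀) * ((m:ℝ) + ω₀)) := by
          rw [hf]; push_cast
          rw [← Real.log_mul (by linarith) (by linarith)]
        have h2 : 2 * f (m+1) = Real.log (((m:ℝ) + 1 + ω₀)^2) := by
          rw [hf]; push_cast
          rw [Real.log_pow]; push_cast; ring
        rw [h1, h2]
        exact Real.log_le_log (by positivity) hprod
      have hK12 : (0:ℝ) ≤ ((K:ℝ)+1)*((K:ℝ)+2) := by positivity
      nlinarith [hlog, hK12]
    have hbern : (0:ℝ) ≤ (Nat.choose K m : ℝ) * x ^ m * (1 - x) ^ (K - m) :=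
      mul_nonneg (mul_nonneg (Nat.cast_nonneg _) (pow_nonneg hx0.le m))
        (pow_nonneg (by linarith) _)
    exact mul_nonpos_of_nonpos_of_nonneg hcoef hbern

lemma chord (f : ℝ → ℝ) (hf : ConcaveOn ℝ (Set.Icc (0:ℝ) 1) f) (c x y : ℝ)
    (hc : c ∈ Set.Icc (0:ℝ) 1) (hy : y ∈ Set.Icc (0:ℝ) 1) (hcx : c < x) (hxy : x ≤ y)
    (hfc : 0 ≤ f c) : f y * (x - c) ≤ f x * (y - c) := by
  rcases eq_or_lt_of_le hxy with rfl | hlt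
  · exact le_of_eq (by ring)
  · have hyc : (0:ℝ) < y - c := by linarith
    set t := (y - x)/(y - c) with ht
    have ht0 : 0 ≤ t := div_nonneg (by linarith) hyc.le
    have ht1 : 1 - t = (x - c)/(y - c) := by rw [ht]; field_simp; ring
    have ht1' : 0 ≤ 1 - t := by rw [ht1]; exact div_nonneg (by linarith) hyc.le
    have hx' : t • c + (1 - t) • y = x := by
      simp only [smul_eq_mul]
      rw [ht1, ht, div_mul_eq_mul_div, div_mul_eq_mul_div, ← add_div, div_eq_iff hyc.ne']; ring
    have := hf.2 hc hy ht0 ht1' (by ring)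
    rw [hx'] at this
    simp only [smul_eq_mul] at this
    have h1 : (1 - t) * f y ≤ f x := by nlinarith
    have h2 : (1 - t) * (y - c) = x - c := by rw [ht1]; field_simp
    calc f y * (x - c) = (1 - t) * f y * (y - c) := by rw [← h2]; ring
      _ ≤ f x * (y - c) := mul_le_mul_of_nonneg_right h1 hyc.le

/-- The equilibrium fraction of socially active users strictly decreases as the
maximum valuation increases: if `v̄₁ < v̄₂` and `aᵢ ∈ (1/(2−δ), 1)` solves
`δ(2−δ)·a·v̄ᵢ − 2(1−δ)·Ĵ(a) = δ·v̄ᵢ`, then `a₁ > a₂`. -/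
theorem stmt3 (n : ℕ) (hn : 3 ≤ n) (ω₀ δ : ℝ) (hω : 1 < ω₀)
    (hδ : δ ∈ Set.Ioo (0 : ℝ) 1)
    (vbar1 vbar2 : ℝ) (h12 : vbar1 < vbar2)
    (h1 : 2 * Real.log ((n : ℝ) - 1 + ω₀) < δ * vbar1)
    (h2 : 2 * Real.log ((n : ℝ) - 1 + ω₀) < δ * vbar2)
    (a1 a2 : ℝ)
    (ha1 : a1 ∈ Set.Ioo (1 / (2 - δ)) 1) (ha2 : a2 ∈ Set.Ioo (1 / (2 - δ)) 1)
    (he1 : δ * (2 - δ) * a1 * vbar1 - 2 * (1 - δ) * Jhat n ω₀ a1 = δ * vbar1)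
    (he2 : δ * (2 - δ) * a2 * vbar2 - 2 * (1 - δ) * Jhat n ω₀ a2 = δ * vbar2) :
    a2 < a1 := by
  obtain ⟨K, rfl⟩ : ∃ K, n = K + 3 := ⟨n - 3, by omega⟩
  obtain ⟨hδ0, hδ1⟩ := hδ
  obtain ⟨ha1l, ha1r⟩ := ha1
  obtain ⟨ha2l, ha2r⟩ := ha2
  set c : ℝ := 1 / (2 - δ) with hc
  have h2δ : (0:ℝ) < 2 - δ := by linarith
  have h2δ1 : (1:ℝ) < 2 - δ := by linarith
  have hc1 : c < 1 := by rw [hc, div_lt_one h2δ]; linarith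
  have hc0 : 0 < c := by rw [hc]; positivity
  have hkey : (2 - δ) * c = 1 := by rw [hc]; field_simp
  have hlogpos : 0 < Real.log (((K+3:ℕ) : ℝ) - 1 + ω₀) := by
    apply Real.log_pos; push_cast; linarith [Nat.cast_nonneg (α := ℝ) K]
  have hδv1 : 0 < δ * vbar1 := by linarith
  have hv1 : 0 < vbar1 := by
    rcases mul_pos_iff.mp hδv1 with ⟨_, h⟩ | ⟨h, _⟩
    · exact h
    · linarith
  have hv2 : 0 < vbar2 := by linarith
  by_contra hcon
  push_neg at hcon
  have hconc := Jhat_concave K ω₀ hω.le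
  have hJc : 0 ≤ Jhat (K+3) ω₀ c := Jhat_nonneg _ _ _ hω.le ⟨hc0.le, hc1.le⟩
  have hch : Jhat (K+3) ω₀ a2 * (a1 - c) ≤ Jhat (K+3) ω₀ a1 * (a2 - c) :=
    chord _ hconc c a1 a2 ⟨hc0.le, hc1.le⟩ ⟨by linarith, ha2r.le⟩ ha1l hcon hJc
  have e1 : δ * vbar1 * ((2-δ)*(a1 - c)) = 2*(1-δ)*Jhat (K+3) ω₀ a1 := by
    linear_combination he1 - δ * vbar1 * hkey
  have e2 : δ * vbar2 * ((2-δ)*(a2 - c)) = 2*(1-δ)*Jhat (K+3) ω₀ a2 := by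
    linear_combination he2 - δ * vbar2 * hkey
  have hpa1 : 0 < a1 - c := by linarith
  have hpa2 : 0 < a2 - c := by linarith
  have h1δ : 0 < 1 - δ := by linarith
  have step : δ * vbar2 * ((2-δ)*(a2-c)) * (a1 - c) ≤ δ * vbar1 * ((2-δ)*(a1-c)) * (a2 - c) := by
    rw [e1, e2]
    have hm := mul_le_mul_of_nonneg_left hch (le_of_lt (by positivity : (0:ℝ) < 2*(1-δ)))
    calc 2*(1-δ)*Jhat (K+3) ω₀ a2 * (a1-c)
        = (2*(1-δ)) * (Jhat (K+3) ω₀ a2 * (a1-c)) := by ring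
      _ ≤ (2*(1-δ)) * (Jhat (K+3) ω₀ a1 * (a2-c)) := hm
      _ = 2*(1-δ)*Jhat (K+3) ω₀ a1 * (a2-c) := by ring
  have hfac : 0 < δ * (2-δ) * (a1-c) * (a2-c) := by positivity
  nlinarith [step, mul_pos hfac (sub_pos.mpr h12)]
end

section
/- Let n ≥ 3 be an integer, ω₀ > 1, δ ∈ (0,1), v̄ > 0, p₀ ≥ 0 with p₀ < v̄ − ln(n−1+ω₀)/δ, and let v† ∈ (0, v̄) be the unique zero of Φ(v) = p₀ + J̃(v)/δ − v on [0, v̄]. Then J̃'(v†) < δ. -/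
open Real Finset

lemma aux_choose (k j : ℕ) (h : j ≤ k) :
    (k + 1 - j) * Nat.choose (k+1) j = (k+1) * Nat.choose k j := by
  have h1 : Nat.choose (k+1) j = Nat.choose (k+1) (k+1-j) :=
    (Nat.choose_symm (Nat.le_succ_of_le h)).symm
  have h2 : k + 1 - j = (k - j) + 1 := by omega
  have h3 := Nat.add_one_mul_choose_eq k (k-j)
  rw [Nat.choose_symm h] at h3
  rw [h1, h2]
  simpa [Nat.succ_eq_add_one, mul_comm] using h3.symm

/-- Bernstein-type polynomial with data `g`. -/
noncomputable def bp (k : ℕ) (g : ℕ → ℝ) (y : ℝ) : ℝ :=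
  ∑ m ∈ Finset.range (k+1), (Nat.choose k m : ℝ) * g m * y ^ m * (1 - y) ^ (k - m)

lemma bp_hasDerivAt (k : ℕ) (g : ℕ → ℝ) (x : ℝ) :
    HasDerivAt (bp (k+1) g)
      (((k : ℝ) + 1) * bp k (fun m => g (m+1) - g m) x) x := by
  have hterm : ∀ m ∈ Finset.range (k+1+1),
      HasDerivAt (fun y : ℝ => (Nat.choose (k+1) m : ℝ) * g m * y ^ m * (1 - y) ^ (k+1-m))
        ((Nat.choose (k+1) m : ℝ) * g m * ((m : ℝ) * x ^ (m-1)) * (1-x)^(k+1-m)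
          + (Nat.choose (k+1) m : ℝ) * g m * x ^ m * ((((k+1-m : ℕ)) : ℝ) * (1-x)^(k+1-m-1) * (-1))) x := by
    intro m _
    have h1 : HasDerivAt (fun y : ℝ => (Nat.choose (k+1) m : ℝ) * g m * y ^ m)
        ((Nat.choose (k+1) m : ℝ) * g m * ((m:ℝ) * x ^ (m-1))) x :=
      (hasDerivAt_pow m x).const_mul _
    have h2 : HasDerivAt (fun y : ℝ => (1 - y) ^ (k+1-m))
        ((((k+1-m : ℕ)) : ℝ) * (1-x) ^ (k+1-m-1) * (-1)) x :=
      (hasDerivAt_pow (k+1-m) (1-x)).comp x ((hasDerivAt_id x).const_sub 1)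
    exact h1.mul h2
  have hsum := HasDerivAt.fun_sum hterm
  have key : (∑ m ∈ Finset.range (k+1+1),
        ((Nat.choose (k+1) m : ℝ) * g m * ((m : ℝ) * x ^ (m-1)) * (1-x)^(k+1-m)
          + (Nat.choose (k+1) m : ℝ) * g m * x ^ m * ((((k+1-m : ℕ)) : ℝ) * (1-x)^(k+1-m-1) * (-1))))
      = ((k : ℝ) + 1) * bp k (fun m => g (m+1) - g m) x := by
    rw [Finset.sum_add_distrib]
    have e1 := Finset.sum_range_succ' (fun m =>
      (Nat.choose (k+1) m : ℝ) * g m * ((m : ℝ) * x ^ (m-1)) * (1-x)^(k+1-m)) (k+1)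
    have e2 := Finset.sum_range_succ (fun m =>
      (Nat.choose (k+1) m : ℝ) * g m * x ^ m * ((((k+1-m : ℕ)) : ℝ) * (1-x)^(k+1-m-1) * (-1))) (k+1)
    rw [e1, e2]
    simp only [Nat.cast_zero, zero_mul, mul_zero, add_zero, Nat.sub_self, Nat.cast_ofNat,
      Nat.cast_add, Nat.cast_one, zero_add]
    rw [bp, Finset.mul_sum, ← Finset.sum_add_distrib]
    refine Finset.sum_congr rfl fun m hm => ?_
    have hmk : m ≤ k := Nat.lt_succ_iff.mp (Finset.mem_range.mp hm)
    have c1 : ((Nat.choose (k+1) (m+1) : ℝ)) * ((m:ℝ)+1) = ((k:ℝ)+1) * (Nat.choose k m : ℝ) := by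
      exact_mod_cast congrArg (Nat.cast (R := ℝ)) (Nat.add_one_mul_choose_eq k m).symm
    have c2 : (((k+1-m : ℕ)) : ℝ) * (Nat.choose (k+1) m : ℝ) = ((k:ℝ)+1) * (Nat.choose k m : ℝ) := by
      exact_mod_cast congrArg (Nat.cast (R := ℝ)) (aux_choose k m hmk)
    have e3 : m + 1 - 1 = m := by omega
    have e4 : k + 1 - (m+1) = k - m := by omega
    have e5 : k + 1 - m - 1 = k - m := by omega
    rw [e3, e4, e5]
    linear_combination (g (m+1) * x^m * (1-x)^(k-m)) * c1 - (g m * x^m * (1-x)^(k-m)) * c2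
  rw [key] at hsum
  exact hsum

/-- If `p₀ < v̄ − ln(n−1+ω₀)/δ` and `v† ∈ (0, v̄)` is the zero of
`Φ(v) = p₀ + J̃(v)/δ − v`, then `J̃'(v†) < δ`. -/
theorem stmt6 (n : ℕ) (hn : 3 ≤ n) (ω₀ δ vbar p₀ vdag : ℝ) (hω : 1 < ω₀)
    (hδ : δ ∈ Set.Ioo (0 : ℝ) 1) (hv : 0 < vbar) (hp : 0 ≤ p₀)
    (hpv : p₀ < vbar - Real.log ((n : ℝ) - 1 + ω₀) / δ)
    (hd : vdag ∈ Set.Ioo (0 : ℝ) vbar)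
    (hzero : p₀ + Jt n ω₀ vbar vdag / δ - vdag = 0) :
    deriv (Jt n ω₀ vbar) vdag < δ := by
  obtain ⟨k, rfl⟩ : ∃ k, n = k + 3 := ⟨n - 3, by omega⟩
  obtain ⟨hδ0, hδ1⟩ := hδ
  obtain ⟨hd0, hd1⟩ := hd
  set f : ℕ → ℝ := fun m => Real.log ((m : ℝ) + ω₀) with hf
  set g1 : ℕ → ℝ := fun m => f (m+1) - f m with hg1
  set g2 : ℕ → ℝ := fun m => g1 (m+1) - g1 m with hg2
  have hJt : Jt (k+3) ω₀ vbar = fun v => bp (k+2) f (v / vbar) := by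
    funext v
    simp only [Jt, bp, hf, show k+3-1 = k+2 by omega, show k+2+1 = k+3 by omega]
  set D1 : ℝ → ℝ := fun v => (((k+1 : ℕ) : ℝ) + 1) * bp (k+1) g1 (v / vbar) * (1 / vbar) with hD1
  have hdiv : ∀ v : ℝ, HasDerivAt (fun v : ℝ => v / vbar) (1 / vbar) v := fun v =>
    (hasDerivAt_id v).div_const vbar
  have hJ' : ∀ v : ℝ, HasDerivAt (Jt (k+3) ω₀ vbar) (D1 v) v := by
    intro v
    rw [hJt]
    exact (bp_hasDerivAt (k+1) f (v / vbar)).comp v (hdiv v)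
  have hD1' : ∀ v : ℝ, HasDerivAt D1
      (((((k+1 : ℕ) : ℝ) + 1) * (((k : ℝ) + 1) * bp k g2 (v / vbar) * (1 / vbar))) * (1 / vbar)) v := by
    intro v
    exact (((bp_hasDerivAt k g1 (v / vbar)).comp v (hdiv v)).const_mul _).mul_const _
  have hg2le : ∀ m : ℕ, g2 m ≤ 0 := by
    intro m
    have hm0 : (0:ℝ) ≤ (m:ℝ) := Nat.cast_nonneg m
    have hpos : (0:ℝ) < (m:ℝ) + ω₀ := by linarith
    have hpos1 : (0:ℝ) < (m:ℝ) + 1 + ω₀ := by linarith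
    have hpos2 : (0:ℝ) < (m:ℝ) + 2 + ω₀ := by linarith
    have h1 : ((m:ℝ) + ω₀) * ((m:ℝ) + 2 + ω₀) ≤ ((m:ℝ) + 1 + ω₀)^2 := by nlinarith
    have h2 : Real.log (((m:ℝ) + ω₀) * ((m:ℝ) + 2 + ω₀)) ≤ Real.log (((m:ℝ) + 1 + ω₀)^2) :=
      (Real.log_le_log_iff (by positivity) (by positivity)).mpr h1
    rw [Real.log_mul hpos.ne' hpos2.ne', Real.log_pow] at h2
    have : g2 m = Real.log ((m:ℝ) + 2 + ω₀) - 2 * Real.log ((m:ℝ) + 1 + ω₀) + Real.log ((m:ℝ) + ω₀) := by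
      simp only [hg2, hg1, hf]
      push_cast
      ring_nf
    rw [this]
    push_cast at h2
    linarith
  have hbple : ∀ x : ℝ, 0 ≤ x → x ≤ 1 → bp k g2 x ≤ 0 := by
    intro x hx0 hx1
    apply Finset.sum_nonpos
    intro m _
    have hnn : (0:ℝ) ≤ (Nat.choose k m : ℝ) * x ^ m * (1-x)^(k-m) := by
      have h1x : (0:ℝ) ≤ 1 - x := by linarith
      positivity
    have heq : (Nat.choose k m : ℝ) * g2 m * x ^ m * (1-x)^(k-m)
        = g2 m * ((Nat.choose k m : ℝ) * x ^ m * (1-x)^(k-m)) := by ring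
    rw [heq]
    exact mul_nonpos_iff.mpr (Or.inr ⟨hg2le m, hnn⟩)
  have hDdiff : Differentiable ℝ D1 := fun v => (hD1' v).differentiableAt
  have hanti : AntitoneOn D1 (Set.Icc 0 vbar) := by
    apply antitoneOn_of_deriv_nonpos (convex_Icc 0 vbar) hDdiff.continuous.continuousOn
      hDdiff.differentiableOn
    intro x hx
    rw [interior_Icc] at hx
    rw [(hD1' x).deriv]
    have hb : bp k g2 (x / vbar) ≤ 0 :=
      hbple _ (div_nonneg hx.1.le hv.le) ((div_le_one hv).mpr hx.2.le)
    have heq : ((((k+1 : ℕ) : ℝ) + 1) * (((k : ℝ) + 1) * bp k g2 (x / vbar) * (1 / vbar))) * (1 / vbar)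
        = bp k g2 (x / vbar) * (((((k+1 : ℕ) : ℝ) + 1)) * (((k : ℝ) + 1)) * (1/vbar) * (1/vbar)) := by
      ring
    rw [heq]
    exact mul_nonpos_iff.mpr (Or.inr ⟨hb, by positivity⟩)
  have hJdiff : Differentiable ℝ (Jt (k+3) ω₀ vbar) := fun v => (hJ' v).differentiableAt
  obtain ⟨c, hc, hceq⟩ := exists_hasDerivAt_eq_slope (Jt (k+3) ω₀ vbar) D1 hd0
    hJdiff.continuous.continuousOn (fun x _ => hJ' x)
  have hJ0 : Jt (k+3) ω₀ vbar 0 = Real.log ω₀ := by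
    rw [Jt, Finset.sum_eq_single 0]
    · norm_num
    · intro m _ hm0
      simp [zero_div, zero_pow hm0]
    · intro h
      simp at h
  have hJd : Jt (k+3) ω₀ vbar vdag = δ * (vdag - p₀) := by
    field_simp at hzero
    linarith
  have hlog : 0 < Real.log ω₀ := Real.log_pos hω
  have hslope : D1 c = (δ * (vdag - p₀) - Real.log ω₀) / vdag := by
    rw [hceq, hJd, hJ0, sub_zero]
  have hlt : D1 c < δ := by
    rw [hslope, div_lt_iff₀ hd0]
    nlinarith [mul_nonneg hδ0.le hp]
  have hmem_c : c ∈ Set.Icc (0:ℝ) vbar := ⟨hc.1.le, by linarith [hc.2]⟩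
  have hmem_d : vdag ∈ Set.Icc (0:ℝ) vbar := ⟨hd0.le, hd1.le⟩
  have hmono : D1 vdag ≤ D1 c := hanti hmem_c hmem_d hc.2.le
  rw [(hJ' vdag).deriv]
  exact lt_of_le_of_lt hmono hlt
end

section
/- Let n ≥ 3 be an integer, ω₀ > 1, v̄ > 2·ln(n−1+ω₀), and δ ∈ (2·ln(n−1+ω₀)/v̄, 1). Let v* ∈ (v̄/(2−δ), v̄) be the unique solution of δ(2−δ)·v − 2(1−δ)·J̃(v) = δ·v̄, and set p₀* = (v̄ − δ·v*)/(2(1−δ)). Then (1+δ)·v̄/2 − p₀* − ln(n−1+ω₀) > 0. -/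
open Real Finset

lemma bern_mean (k : ℕ) (p : ℝ) :
    ∑ m ∈ Finset.range (k + 1), (m : ℝ) * (Nat.choose k m : ℝ) * p ^ m * (1 - p) ^ (k - m)
      = (k : ℝ) * p := by
  have h := congrArg (Polynomial.eval p) (bernsteinPolynomial.sum_smul ℝ k)
  simpa [bernsteinPolynomial, Polynomial.eval_finset_sum, mul_assoc, mul_comm, mul_left_comm]
    using h

lemma log_chord (k m : ℕ) (hk : 0 < k) (hm : m ≤ k) {ω₀ : ℝ} (hω : 1 ≤ ω₀) :
    ((m : ℝ) / k) * Real.log ((k : ℝ) + ω₀) ≤ Real.log ((m : ℝ) + ω₀) := by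
  set t : ℝ := (m : ℝ) / k with ht
  have hkp : (0:ℝ) < k := by exact_mod_cast hk
  have ht0 : 0 ≤ t := by positivity
  have ht1 : t ≤ 1 := div_le_one_of_le₀ (by exact_mod_cast hm) hkp.le
  have hx : ω₀ ∈ Set.Ioi (0:ℝ) := by simp; linarith
  have hy : (k : ℝ) + ω₀ ∈ Set.Ioi (0:ℝ) := by simp; linarith
  have h := strictConcaveOn_log_Ioi.concaveOn.2 hx hy (by linarith : (0:ℝ) ≤ 1 - t) ht0
    (by ring)
  have harg : (1 - t) • ω₀ + t • ((k:ℝ) + ω₀) = (m : ℝ) + ω₀ := by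
    have : t * (k:ℝ) = (m:ℝ) := by rw [ht]; exact div_mul_cancel₀ _ hkp.ne'
    simp only [smul_eq_mul]; nlinarith [this]
  rw [harg] at h
  have hlog0 : 0 ≤ Real.log ω₀ := Real.log_nonneg hω
  simp only [smul_eq_mul] at h
  nlinarith [h, hlog0]

lemma Jt_ge (n : ℕ) (hn : 2 ≤ n) {ω₀ vbar v : ℝ} (hω : 1 ≤ ω₀) (hv0 : 0 ≤ v)
    (hvv : v ≤ vbar) (hvb : 0 < vbar) :
    (v / vbar) * Real.log ((n : ℝ) - 1 + ω₀) ≤ Jt n ω₀ vbar v := by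
  obtain ⟨k, rfl⟩ : ∃ k, n = k + 1 := ⟨n - 1, by omega⟩
  have hk : 0 < k := by omega
  have hkp : (0:ℝ) < k := by exact_mod_cast hk
  set p := v / vbar with hp
  have hp0 : 0 ≤ p := by positivity
  have hp1 : p ≤ 1 := div_le_one_of_le₀ hvv hvb.le
  have hcast : ((k + 1 : ℕ) : ℝ) - 1 = (k : ℝ) := by push_cast; ring
  rw [Jt, hcast]
  simp only [Nat.add_sub_cancel]
  set L := Real.log ((k : ℝ) + ω₀) with hL
  calc p * L = (L / k) * ((k : ℝ) * p) := by field_simp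
    _ = (L / k) * ∑ m ∈ Finset.range (k + 1),
          (m : ℝ) * (Nat.choose k m : ℝ) * p ^ m * (1 - p) ^ (k - m) := by rw [bern_mean]
    _ = ∑ m ∈ Finset.range (k + 1),
          ((m : ℝ) / k * L) * ((Nat.choose k m : ℝ) * p ^ m * (1 - p) ^ (k - m)) := by
        rw [Finset.mul_sum]; exact Finset.sum_congr rfl fun m _ => by field_simp
    _ ≤ ∑ m ∈ Finset.range (k + 1),
          (Nat.choose k m : ℝ) * Real.log ((m : ℝ) + ω₀) * p ^ m * (1 - p) ^ (k - m) := by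
        apply Finset.sum_le_sum
        intro m hm
        have hmk : m ≤ k := by simpa using Nat.lt_succ_iff.mp (Finset.mem_range.mp hm)
        have hw : (0:ℝ) ≤ (Nat.choose k m : ℝ) * p ^ m * (1 - p) ^ (k - m) :=
          mul_nonneg (mul_nonneg (by positivity) (pow_nonneg hp0 _))
            (pow_nonneg (by linarith) _)
        have := mul_le_mul_of_nonneg_right (log_chord k m hk hmk hω) hw
        calc ((m : ℝ) / k * L) * ((Nat.choose k m : ℝ) * p ^ m * (1 - p) ^ (k - m))
            ≤ Real.log ((m : ℝ) + ω₀) * ((Nat.choose k m : ℝ) * p ^ m * (1 - p) ^ (k - m)) :=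
              this
          _ = (Nat.choose k m : ℝ) * Real.log ((m : ℝ) + ω₀) * p ^ m * (1 - p) ^ (k - m) := by
              ring


/-- In the PBE with partially active users (`v*` the equilibrium threshold and
`p₀* = (v̄ − δv*)/(2(1−δ))` the equilibrium uniform price),
`(1+δ)·v̄/2 − p₀* − ln(n−1+ω₀) > 0`. -/
theorem stmt7 (n : ℕ) (hn : 3 ≤ n) (ω₀ δ vbar vstar : ℝ) (hω : 1 < ω₀)
    (hv : 2 * Real.log ((n : ℝ) - 1 + ω₀) < vbar)
    (hδ : δ ∈ Set.Ioo (2 * Real.log ((n : ℝ) - 1 + ω₀) / vbar) 1)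
    (hvs : vstar ∈ Set.Ioo (vbar / (2 - δ)) vbar)
    (heq : δ * (2 - δ) * vstar - 2 * (1 - δ) * Jt n ω₀ vbar vstar = δ * vbar) :
    0 < (1 + δ) * vbar / 2 - (vbar - δ * vstar) / (2 * (1 - δ)) -
      Real.log ((n : ℝ) - 1 + ω₀) := by
  obtain ⟨hδl, hδ1⟩ := hδ
  obtain ⟨hvsl, hvsu⟩ := hvs
  set L := Real.log ((n : ℝ) - 1 + ω₀) with hLdef
  have hn3 : (3:ℝ) ≤ (n:ℝ) := by exact_mod_cast hn
  have hL0 : 0 < L := Real.log_pos (by linarith)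
  have hvb : 0 < vbar := by linarith
  have hδ0 : 0 < δ := lt_trans (by positivity) hδl
  have h2δ : 0 < 2 - δ := by linarith
  have hst : 0 < vstar := lt_trans (by positivity) hvsl
  have h1δ : 0 < 1 - δ := by linarith
  set J := Jt n ω₀ vbar vstar with hJdef
  have hJge : (vstar / vbar) * L ≤ J := Jt_ge n (by omega) hω.le hst.le hvsu.le hvb
  have hL : L * vstar ≤ J * vbar := by
    rw [div_mul_eq_mul_div, div_le_iff₀ hvb] at hJge
    linarith [hJge]
  have hJA : J * (2 * (1 - δ)) = δ * (2 - δ) * vstar - δ * vbar := by linarith [heq]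
  have h1 : (vbar - δ * vstar) / (2 * (1 - δ)) = (δ * vstar - J) / δ := by
    rw [div_eq_div_iff (by positivity) hδ0.ne']
    linear_combination -heq
  rw [h1]
  have h4 : 0 ≤ 2 * δ * (1 - δ) * (J * vbar - L * vstar) :=
    mul_nonneg (by positivity) (by linarith)
  have h5 : 0 < δ ^ 2 * (vbar - vstar) ^ 2 := by
    have : 0 < vbar - vstar := by linarith
    positivity
  have hm : 0 < 2 * (1 - δ) * vstar := by positivity
  have h2 : (δ * vstar - J) / δ < (1 + δ) * vbar / 2 - L := by
    rw [div_lt_iff₀ hδ0]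
    have e2 : (((1 + δ) * vbar / 2 - L) * δ - (δ * vstar - J)) * (2 * (1 - δ) * vstar)
        = δ ^ 2 * (vbar - vstar) ^ 2 + 2 * δ * (1 - δ) * (J * vbar - L * vstar) := by
      linear_combination (vstar - δ * vbar) * hJA
    nlinarith [e2, h4, h5, hm]
  linarith
end

section
/- Let n ≥ 2 be an integer, ω₀ > 1, δ ∈ (0,1), and v̄ > (2/δ)·ln(n−1+ω₀). Then J̃'(v) < δ/2 for every v ∈ [v̄/2, v̄]. -/
open Real Finset

/-- Bernstein polynomial with coefficients `a`. -/
noncomputable def bern (k : ℕ) (a : ℕ → ℝ) (x : ℝ) : ℝ :=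
  ∑ m ∈ Finset.range (k+1), (Nat.choose k m : ℝ) * a m * x ^ m * (1-x) ^ (k-m)

lemma bern_hasDerivAt_s8 (k : ℕ) (a : ℕ → ℝ) (x : ℝ) :
    HasDerivAt (bern k a)
      ((k:ℝ) * ∑ m ∈ Finset.range k,
        (Nat.choose (k-1) m : ℝ) * (a (m+1) - a m) * x ^ m * (1-x) ^ (k-1-m)) x := by
  have h1 : ∀ m : ℕ, HasDerivAt (fun y : ℝ => (Nat.choose k m : ℝ) * a m * y ^ m * (1-y) ^ (k-m))
      ((Nat.choose k m : ℝ) * a m *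
        ((m:ℝ) * x ^ (m-1) * (1-x) ^ (k-m) - (k-m : ℕ) * (x ^ m * (1-x) ^ (k-m-1)))) x := by
    intro m
    have hx : HasDerivAt (fun y : ℝ => y ^ m) ((m:ℝ) * x ^ (m-1)) x := hasDerivAt_pow m x
    have hy : HasDerivAt (fun y : ℝ => (1-y) ^ (k-m)) (-(((k-m : ℕ):ℝ) * (1-x) ^ (k-m-1))) x := by
      have h0 : HasDerivAt (fun y : ℝ => 1 - y) (-1 : ℝ) x := by
        simpa using (hasDerivAt_const x (1:ℝ)).fun_sub (hasDerivAt_id x)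
      have := (hasDerivAt_pow (k-m) (1-x)).comp x h0
      simpa [Function.comp_def, mul_comm, mul_assoc, mul_left_comm] using this
    have := ((hx.const_mul ((Nat.choose k m : ℝ) * a m)).fun_mul hy)
    exact this.congr_deriv (by ring)
  have hsum := HasDerivAt.fun_sum (fun m _ => h1 m) (u := Finset.range (k+1))
  suffices h : (∑ m ∈ Finset.range (k+1), (Nat.choose k m : ℝ) * a m *
        ((m:ℝ) * x ^ (m-1) * (1-x) ^ (k-m) - (k-m : ℕ) * (x ^ m * (1-x) ^ (k-m-1))))
      = (k:ℝ) * ∑ m ∈ Finset.range k,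
        (Nat.choose (k-1) m : ℝ) * (a (m+1) - a m) * x ^ m * (1-x) ^ (k-1-m) by
    exact h ▸ hsum
  -- identity of sums
  rcases Nat.eq_zero_or_pos k with hk | hk
  · subst hk; simp
  have key : ∀ S1 : ℝ, S1 = S1 := fun _ => rfl
  -- split RHS sum into two parts
  have split : ∀ m ∈ Finset.range (k+1),
      (Nat.choose k m : ℝ) * a m *
        ((m:ℝ) * x ^ (m-1) * (1-x) ^ (k-m) - (k-m : ℕ) * (x ^ m * (1-x) ^ (k-m-1)))
      = (Nat.choose k m : ℝ) * a m * ((m:ℝ) * x ^ (m-1) * (1-x) ^ (k-m))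
        - (Nat.choose k m : ℝ) * a m * ((k-m : ℕ) * (x ^ m * (1-x) ^ (k-m-1))) := by
    intro m _; ring
  rw [Finset.sum_congr rfl split, Finset.sum_sub_distrib]
  have e1 : ∑ m ∈ Finset.range (k+1),
      (Nat.choose k m : ℝ) * a m * ((m:ℝ) * x ^ (m-1) * (1-x) ^ (k-m))
      = ∑ m ∈ Finset.range k,
        (k:ℝ) * ((Nat.choose (k-1) m : ℝ) * a (m+1) * x ^ m * (1-x) ^ (k-1-m)) := by
    rw [Finset.sum_range_succ']
    simp only [Nat.cast_zero, zero_mul, mul_zero, add_zero]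
    apply Finset.sum_congr rfl
    intro m hm
    have hm' : m < k := Finset.mem_range.mp hm
    have hc : (k:ℝ) * (Nat.choose (k-1) m : ℝ) = (Nat.choose k (m+1) : ℝ) * (m+1 : ℕ) := by
      have := Nat.add_one_mul_choose_eq (k-1) m
      rw [Nat.sub_add_cancel hk] at this
      exact_mod_cast congrArg (Nat.cast : ℕ → ℝ) this
    have hexp : k - (m+1) = k - 1 - m := by omega
    have hexp2 : m + 1 - 1 = m := rfl
    rw [hexp, hexp2]
    push_cast at hc ⊢
    linear_combination (-(a (m+1) * x ^ m * (1 - x) ^ (k - 1 - m))) * hc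
  have e2 : ∑ m ∈ Finset.range (k+1),
      (Nat.choose k m : ℝ) * a m * ((k-m : ℕ) * (x ^ m * (1-x) ^ (k-m-1)))
      = ∑ m ∈ Finset.range k,
        (k:ℝ) * ((Nat.choose (k-1) m : ℝ) * a m * x ^ m * (1-x) ^ (k-1-m)) := by
    rw [Finset.sum_range_succ]
    simp only [Nat.sub_self, Nat.cast_zero, zero_mul, mul_zero, add_zero]
    apply Finset.sum_congr rfl
    intro m hm
    have hm' : m < k := Finset.mem_range.mp hm
    have hc : Nat.choose k m * (k - m) = k * Nat.choose (k-1) m := by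
      have h1 := Nat.choose_succ_right_eq k m
      have h2 := Nat.add_one_mul_choose_eq (k-1) m
      rw [Nat.sub_add_cancel hk] at h2
      exact h1.symm.trans h2.symm
    have hcast : ((k - m : ℕ) : ℝ) = (k : ℝ) - m := by
      push_cast [Nat.cast_sub hm'.le]; ring
    have hcR : (Nat.choose k m : ℝ) * ((k:ℝ) - m) = (k:ℝ) * (Nat.choose (k-1) m : ℝ) := by
      rw [← hcast]; exact_mod_cast congrArg (Nat.cast : ℕ → ℝ) hc
    have hexp : k - m - 1 = k - 1 - m := by omega
    rw [hexp, hcast]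
    linear_combination (a m * x ^ m * (1 - x) ^ (k - 1 - m)) * hcR
  rw [e1, e2, ← Finset.sum_sub_distrib, Finset.mul_sum]
  apply Finset.sum_congr rfl
  intro m _
  ring

/-- the step function `g` -/
noncomputable def gg (m : ℕ) : ℝ := Real.log ((m:ℝ) + 2) - Real.log ((m:ℝ) + 1)

lemma gg_antitone (m : ℕ) : gg (m+1) ≤ gg m := by
  unfold gg
  push_cast
  have h1 : Real.log (((m:ℝ)+3) * ((m:ℝ)+1)) ≤ Real.log (((m:ℝ)+2) * ((m:ℝ)+2)) := by
    apply Real.log_le_log (by positivity)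
    nlinarith [sq_nonneg ((m:ℝ))]
  rw [Real.log_mul (by positivity) (by positivity), Real.log_mul (by positivity) (by positivity)] at h1
  have e1 : (m:ℝ)+1+2 = (m:ℝ)+3 := by ring
  have e2 : (m:ℝ)+1+1 = (m:ℝ)+2 := by ring
  rw [e1, e2]
  linarith
lemma gg_nonneg (m : ℕ) : 0 ≤ gg m := by
  unfold gg
  have := Real.log_le_log (x := (m:ℝ)+1) (by positivity) (by linarith : (m:ℝ)+1 ≤ (m:ℝ)+2)
  linarith

lemma gg_le (m : ℕ) : gg m ≤ 1 / ((m:ℝ)+1) := by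
  unfold gg
  have h0 : (0:ℝ) < (m:ℝ)+1 := by positivity
  rw [← Real.log_div (by positivity) (by positivity)]
  have := Real.log_le_sub_one_of_pos (show (0:ℝ) < ((m:ℝ)+2)/((m:ℝ)+1) by positivity)
  have he : ((m:ℝ)+2)/((m:ℝ)+1) - 1 = 1/((m:ℝ)+1) := by
    field_simp
    ring
  linarith [he ▸ this]

/-- value of the Bernstein sum at 1/2 -/
lemma bern_half (k : ℕ) (a : ℕ → ℝ) :
    bern k a (1/2) = (1/2)^k * ∑ m ∈ Finset.range (k+1), (Nat.choose k m : ℝ) * a m := by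
  unfold bern
  rw [Finset.mul_sum]
  apply Finset.sum_congr rfl
  intro m hm
  have hm' : m ≤ k := by have := Finset.mem_range.mp hm; omega
  have : (1:ℝ) - 1/2 = 1/2 := by norm_num
  rw [this, mul_assoc, ← pow_add, show m + (k - m) = k by omega]
  ring

lemma bern_antitone (k : ℕ) : AntitoneOn (bern k gg) (Set.Icc (1/2 : ℝ) 1) := by
  apply antitoneOn_of_deriv_nonpos (convex_Icc _ _)
  · exact fun y _ => ((bern_hasDerivAt_s8 k gg y).differentiableAt).continuousAt.continuousWithinAt
  · exact fun y _ => ((bern_hasDerivAt_s8 k gg y).differentiableAt).differentiableWithinAt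
  · intro y hy
    rw [interior_Icc, Set.mem_Ioo] at hy
    rw [(bern_hasDerivAt_s8 k gg y).deriv]
    have hS : ∑ m ∈ Finset.range k,
        (Nat.choose (k-1) m : ℝ) * (gg (m+1) - gg m) * y ^ m * (1-y) ^ (k-1-m) ≤ 0 := by
      apply Finset.sum_nonpos
      intro m _
      have h1 : gg (m+1) - gg m ≤ 0 := by linarith [gg_antitone m]
      have h2 : (0:ℝ) ≤ y ^ m := by
        apply pow_nonneg; linarith [hy.1]
      have h3 : (0:ℝ) ≤ (1-y) ^ (k-1-m) := by
        apply pow_nonneg; linarith [hy.2]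
      have h4 : (0:ℝ) ≤ (Nat.choose (k-1) m : ℝ) := by positivity
      have hprod : (0:ℝ) ≤ (Nat.choose (k-1) m : ℝ) * y ^ m * (1-y) ^ (k-1-m) :=
        mul_nonneg (mul_nonneg h4 h2) h3
      calc (Nat.choose (k-1) m : ℝ) * (gg (m+1) - gg m) * y ^ m * (1-y) ^ (k-1-m)
          = (gg (m+1) - gg m) * ((Nat.choose (k-1) m : ℝ) * y ^ m * (1-y) ^ (k-1-m)) := by ring
        _ ≤ 0 := mul_nonpos_iff.mpr (Or.inr ⟨h1, hprod⟩)
    have hknn : (0:ℝ) ≤ (k:ℝ) := Nat.cast_nonneg k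
    nlinarith [mul_nonneg hknn (neg_nonneg.mpr hS)]

lemma L4 : Real.log 4 = 2 * Real.log 2 := by
  rw [show (4:ℝ) = 2^2 by norm_num, Real.log_pow]; push_cast; ring
lemma L6 : Real.log 6 = Real.log 2 + Real.log 3 := by
  rw [show (6:ℝ) = 2*3 by norm_num, Real.log_mul (by norm_num) (by norm_num)]
lemma K2 : 3 * Real.log 3 ≤ 5 * Real.log 2 := by
  have h := Real.log_le_log (show (0:ℝ) < 3^3 by norm_num) (show (3:ℝ)^3 ≤ 2^5 by norm_num)
  rw [Real.log_pow, Real.log_pow] at h; push_cast at h; linarith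
lemma K3 : 2 * Real.log 2 ≤ Real.log 5 := by
  have h := Real.log_le_log (show (0:ℝ) < 2^2 by norm_num) (show (2:ℝ)^2 ≤ 5 by norm_num)
  rw [Real.log_pow] at h; push_cast at h; linarith
lemma K4 : 5 * Real.log 5 ≤ 2 * Real.log 2 + 7 * Real.log 3 := by
  have h := Real.log_le_log (show (0:ℝ) < 5^5 by norm_num)
    (show (5:ℝ)^5 ≤ 2^2 * 3^7 by norm_num)
  rw [Real.log_pow, Real.log_mul (by norm_num) (by norm_num), Real.log_pow, Real.log_pow] at h
  push_cast at h; linarith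
lemma K5 : 15 * Real.log 5 ≤ 3 * Real.log 3 + 13 * Real.log 7 := by
  have h := Real.log_le_log (show (0:ℝ) < 5^15 by norm_num)
    (show (5:ℝ)^15 ≤ 3^3 * 7^13 by norm_num)
  rw [Real.log_pow, Real.log_mul (by norm_num) (by norm_num), Real.log_pow, Real.log_pow] at h
  push_cast at h; linarith

lemma key_half (k : ℕ) : ((k:ℝ)+1) * bern k gg (1/2) ≤ Real.log ((k:ℝ)+2) := by
  rw [bern_half]
  rcases le_or_gt k 5 with hk | hk
  · interval_cases k <;>
      simp [Finset.sum_range_succ, gg, Nat.choose] <;> norm_num <;>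
      linarith [L4, L6, K2, K3, K4, K5]
  · -- large case
    have hk1 : (0:ℝ) < (k:ℝ)+1 := by positivity
    have hterm : ∀ m ∈ Finset.range (k+1),
        (Nat.choose k m : ℝ) * gg m ≤ (Nat.choose (k+1) (m+1) : ℝ) / ((k:ℝ)+1) := by
      intro m _
      have h1 : (Nat.choose k m : ℝ) * gg m ≤ (Nat.choose k m : ℝ) * (1/((m:ℝ)+1)) :=
        mul_le_mul_of_nonneg_left (gg_le m) (by positivity)
      have h2 : ((k:ℕ)+1) * Nat.choose k m = Nat.choose (k+1) (m+1) * (m+1) :=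
        Nat.add_one_mul_choose_eq k m
      have h2R : ((k:ℝ)+1) * (Nat.choose k m : ℝ) = (Nat.choose (k+1) (m+1) : ℝ) * ((m:ℝ)+1) := by
        exact_mod_cast congrArg (Nat.cast : ℕ → ℝ) h2
      have hm1 : (0:ℝ) < (m:ℝ)+1 := by positivity
      have h3 : (Nat.choose k m : ℝ) * (1/((m:ℝ)+1)) = (Nat.choose (k+1) (m+1) : ℝ) / ((k:ℝ)+1) := by
        rw [mul_one_div, div_eq_div_iff hm1.ne' hk1.ne']
        linarith [h2R]
      linarith
    have hsum := Finset.sum_le_sum hterm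
    have hchoose : ∑ m ∈ Finset.range (k+1), (Nat.choose (k+1) (m+1) : ℝ) ≤ 2^(k+1) := by
      have hN : ∑ m ∈ Finset.range (k+1), Nat.choose (k+1) (m+1) ≤ 2^(k+1) := by
        have h0 := Nat.sum_range_choose (k+1)
        have := Finset.sum_range_succ' (fun j => Nat.choose (k+1) j) (k+1)
        omega
      calc ∑ m ∈ Finset.range (k+1), (Nat.choose (k+1) (m+1) : ℝ)
          = ((∑ m ∈ Finset.range (k+1), Nat.choose (k+1) (m+1) : ℕ) : ℝ) := by push_cast; ring
        _ ≤ ((2^(k+1) : ℕ) : ℝ) := by exact_mod_cast hN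
        _ = 2^(k+1) := by push_cast; ring
    have hdiv : ∑ m ∈ Finset.range (k+1), (Nat.choose (k+1) (m+1) : ℝ) / ((k:ℝ)+1)
        = (∑ m ∈ Finset.range (k+1), (Nat.choose (k+1) (m+1) : ℝ)) / ((k:ℝ)+1) := by
      rw [Finset.sum_div]
    have htot : ((k:ℝ)+1) * ((1/2)^k * ∑ m ∈ Finset.range (k+1), (Nat.choose k m : ℝ) * gg m)
        ≤ 2 := by
      have hs2 : ∑ m ∈ Finset.range (k+1), (Nat.choose k m : ℝ) * gg m ≤ 2^(k+1) / ((k:ℝ)+1) := by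
        rw [hdiv] at hsum
        apply hsum.trans
        gcongr
      have hp : (0:ℝ) < (1/2:ℝ)^k := by positivity
      calc ((k:ℝ)+1) * ((1/2)^k * ∑ m ∈ Finset.range (k+1), (Nat.choose k m : ℝ) * gg m)
          ≤ ((k:ℝ)+1) * ((1/2)^k * (2^(k+1) / ((k:ℝ)+1))) := by
            apply mul_le_mul_of_nonneg_left _ (by positivity)
            exact mul_le_mul_of_nonneg_left hs2 (by positivity)
        _ = (1/2)^k * 2^(k+1) := by field_simp
        _ = 2 := by
            rw [div_pow, one_pow, pow_succ]
            field_simp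
    have hlog : (2:ℝ) ≤ Real.log ((k:ℝ)+2) := by
      have h8 : (8:ℝ) ≤ (k:ℝ)+2 := by
        have : (6:ℝ) ≤ (k:ℝ) := by exact_mod_cast hk
        linarith
      have := Real.log_le_log (by norm_num : (0:ℝ) < 8) h8
      rw [show (8:ℝ) = 2^3 by norm_num, Real.log_pow] at this
      have h2 := Real.log_two_gt_d9
      push_cast at this
      nlinarith
    linarith

/-- If `v̄ > (2/δ)·ln(n−1+ω₀)` then `J̃'(v) < δ/2` for every `v ∈ [v̄/2, v̄]`. -/
theorem stmt8 (n : ℕ) (hn : 2 ≤ n) (ω₀ δ vbar : ℝ) (hω : 1 < ω₀)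
    (hδ : δ ∈ Set.Ioo (0 : ℝ) 1)
    (hv : 2 / δ * Real.log ((n : ℝ) - 1 + ω₀) < vbar) :
    ∀ v ∈ Set.Icc (vbar / 2) vbar, deriv (Jt n ω₀ vbar) v < δ / 2 := by
  obtain ⟨k, rfl⟩ : ∃ k, n = k + 2 := ⟨n - 2, by omega⟩
  intro v hv'
  obtain ⟨hv1, hv2⟩ := hv'
  obtain ⟨hδ0, hδ1⟩ := hδ
  have hL : (0:ℝ) < Real.log ((k+2 : ℕ) - 1 + ω₀) := by
    apply Real.log_pos
    push_cast; linarith [Nat.cast_nonneg (α := ℝ) k]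
  have hvbar : (0:ℝ) < vbar := by
    have h2δ : (0:ℝ) < 2/δ := by positivity
    nlinarith
  set x := v / vbar with hxdef
  have hx1 : (1/2 : ℝ) ≤ x := by
    rw [hxdef, le_div_iff₀ hvbar]; linarith
  have hx2 : x ≤ 1 := by
    rw [hxdef, div_le_one hvbar]; linarith
  -- the coefficients
  set a : ℕ → ℝ := fun m => Real.log ((m:ℝ) + ω₀) with hadef
  have hJeq : Jt (k+2) ω₀ vbar = fun w => bern (k+1) a (w / vbar) := rfl
  -- derivative of Jt
  have hb := bern_hasDerivAt_s8 (k+1) a x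
  have hdiv : HasDerivAt (fun w : ℝ => w / vbar) (1/vbar) v := by
    simpa using (hasDerivAt_id v).div_const vbar
  have hJ : HasDerivAt (Jt (k+2) ω₀ vbar)
      ((((k:ℝ)+1) * ∑ m ∈ Finset.range (k+1),
        (Nat.choose k m : ℝ) * (a (m+1) - a m) * x ^ m * (1-x) ^ (k-m)) * (1/vbar)) v := by
    rw [hJeq]
    have := HasDerivAt.comp v (by simpa using hb) hdiv
    simpa [Function.comp_def] using this
  rw [hJ.deriv]
  -- bound the sum by bern k gg x
  have hsum_le : ∑ m ∈ Finset.range (k+1),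
      (Nat.choose k m : ℝ) * (a (m+1) - a m) * x ^ m * (1-x) ^ (k-m) ≤ bern k gg x := by
    unfold bern
    apply Finset.sum_le_sum
    intro m _
    have hstep : a (m+1) - a m ≤ gg m := by
      rw [hadef]
      unfold gg
      simp only
      push_cast
      have h1 : Real.log (((m:ℝ)+1+ω₀) * ((m:ℝ)+1)) ≤ Real.log (((m:ℝ)+2) * ((m:ℝ)+ω₀)) := by
        apply Real.log_le_log (by positivity)
        nlinarith
      rw [Real.log_mul (by positivity) (by positivity),
        Real.log_mul (by positivity) (by positivity)] at h1
      linarith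
    have h2 : (0:ℝ) ≤ x ^ m := by apply pow_nonneg; linarith
    have h3 : (0:ℝ) ≤ (1-x) ^ (k-m) := by apply pow_nonneg; linarith
    have h4 : (0:ℝ) ≤ (Nat.choose k m : ℝ) := by positivity
    have hprod : (0:ℝ) ≤ (Nat.choose k m : ℝ) * x ^ m * (1-x) ^ (k-m) :=
      mul_nonneg (mul_nonneg h4 h2) h3
    calc (Nat.choose k m : ℝ) * (a (m+1) - a m) * x ^ m * (1-x) ^ (k-m)
        = (a (m+1) - a m) * ((Nat.choose k m : ℝ) * x ^ m * (1-x) ^ (k-m)) := by ring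
      _ ≤ gg m * ((Nat.choose k m : ℝ) * x ^ m * (1-x) ^ (k-m)) :=
          mul_le_mul_of_nonneg_right hstep hprod
      _ = (Nat.choose k m : ℝ) * gg m * x ^ m * (1-x) ^ (k-m) := by ring
  -- monotonicity
  have hmono : bern k gg x ≤ bern k gg (1/2) :=
    bern_antitone k (Set.mem_Icc.mpr ⟨le_refl _, by norm_num⟩) (Set.mem_Icc.mpr ⟨hx1, hx2⟩) hx1
  -- combine
  have hkey := key_half k
  have hlog : Real.log ((k:ℝ)+2) < Real.log ((k+2 : ℕ) - 1 + ω₀) := by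
    apply Real.log_lt_log (by positivity)
    push_cast; linarith
  have hfin : Real.log ((k+2 : ℕ) - 1 + ω₀) / vbar < δ / 2 := by
    rw [div_lt_iff₀ hvbar]
    have h2δ : (0:ℝ) < δ/2 := by positivity
    calc Real.log ((k+2 : ℕ) - 1 + ω₀) = (δ/2) * (2/δ * Real.log ((k+2 : ℕ) - 1 + ω₀)) := by
          field_simp
      _ < δ/2 * vbar := by
          apply mul_lt_mul_of_pos_left hv h2δ
  have hk1 : (0:ℝ) < (k:ℝ)+1 := by positivity
  calc (((k:ℝ)+1) * ∑ m ∈ Finset.range (k+1),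
        (Nat.choose k m : ℝ) * (a (m+1) - a m) * x ^ m * (1-x) ^ (k-m)) * (1/vbar)
      ≤ (((k:ℝ)+1) * bern k gg (1/2)) * (1/vbar) := by
        apply mul_le_mul_of_nonneg_right _ (by positivity)
        apply mul_le_mul_of_nonneg_left _ (by positivity)
        exact hsum_le.trans hmono
    _ ≤ Real.log ((k:ℝ)+2) * (1/vbar) := by
        apply mul_le_mul_of_nonneg_right hkey (by positivity)
    _ < δ / 2 := by
        have : Real.log ((k:ℝ)+2) * (1/vbar) < Real.log ((k+2 : ℕ) - 1 + ω₀) * (1/vbar) := by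
          apply mul_lt_mul_of_pos_right hlog (by positivity)
        calc Real.log ((k:ℝ)+2) * (1/vbar) < Real.log ((k+2 : ℕ) - 1 + ω₀) * (1/vbar) := this
          _ = Real.log ((k+2 : ℕ) - 1 + ω₀) / vbar := by ring
          _ < δ/2 := hfin
end

section
/- Let n ≥ 2 be an integer and ω₀ > 1 a real number. For 1 ≤ k ≤ n−1 set C_k = binom(n−2, k−1) and L_k = ln(k+ω₀) − ln(k−1+ω₀). Then (n−1) · Σ_{m=1}^{n−1} C_m · L_m ≤ (Σ_{k=1}^{n−1} C_k) · (Σ_{m=1}^{n−1} L_m). -/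
open Real Finset

private lemma choose_mono_half {N : ℕ} : ∀ b : ℕ, ∀ a : ℕ, a ≤ b → 2 * b ≤ N →
    N.choose a ≤ N.choose b := by
  intro b
  induction b with
  | zero => intro a ha _; simp [Nat.le_zero.mp ha]
  | succ b ih =>
    intro a ha hb
    rcases Nat.lt_or_ge a (b+1) with h | h
    · have h1 : N.choose a ≤ N.choose b := ih a (by omega) (by omega)
      have h2 : N.choose b ≤ N.choose (b+1) :=
        Nat.choose_le_succ_of_lt_half_left (by omega)
      exact h1.trans h2
    · have : a = b + 1 := by omega
      simp [this]

private lemma choose_dist {N i j : ℕ} (hi : i ≤ N) (hj : j ≤ N)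
    (h : ((2*i : ℤ) - N)^2 ≤ ((2*j : ℤ) - N)^2) : N.choose j ≤ N.choose i := by
  set i' := min i (N - i) with hi'
  set j' := min j (N - j) with hj'
  have hci : N.choose i = N.choose i' := by
    rcases le_or_gt i (N - i) with h' | h'
    · simp [hi', min_eq_left h']
    · rw [hi', min_eq_right h'.le, Nat.choose_symm hi]
  have hcj : N.choose j = N.choose j' := by
    rcases le_or_gt j (N - j) with h' | h'
    · simp [hj', min_eq_left h']
    · rw [hj', min_eq_right h'.le, Nat.choose_symm hj]
  have hsi : ((2*i : ℤ) - N)^2 = ((N : ℤ) - 2*i')^2 := by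
    rcases le_or_gt i (N - i) with h' | h'
    · have : i' = i := by omega
      rw [this]; ring
    · have : (i' : ℤ) = N - i := by omega
      rw [this]; ring
  have hsj : ((2*j : ℤ) - N)^2 = ((N : ℤ) - 2*j')^2 := by
    rcases le_or_gt j (N - j) with h' | h'
    · have : j' = j := by omega
      rw [this]; ring
    · have : (j' : ℤ) = N - j := by omega
      rw [this]; ring
  have h2i : 2 * i' ≤ N := by omega
  have h2j : 2 * j' ≤ N := by omega
  have hji : j' ≤ i' := by
    rw [hsi, hsj] at h
    nlinarith [sq_nonneg ((N:ℤ) - 2*i'), sq_nonneg ((N:ℤ) - 2*j')]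
  rw [hci, hcj]
  exact choose_mono_half i' j' hji h2i

private lemma sum_reflect (n : ℕ) (f : ℕ → ℝ) :
    ∑ m ∈ Finset.Icc 1 (n-1), f m = ∑ m ∈ Finset.Icc 1 (n-1), f (n - m) := by
  refine Finset.sum_nbij' (fun m => n - m) (fun m => n - m) ?_ ?_ ?_ ?_ ?_ <;>
      intro a ha <;> simp only [Finset.mem_Icc] at ha
  · simp only [Finset.mem_Icc]; omega
  · simp only [Finset.mem_Icc]; omega
  · show n - (n - a) = a; omega
  · show n - (n - a) = a; omega
  · show f a = f (n - (n - a)); rw [Nat.sub_sub_self (by omega)]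

/-- Chebyshev-sum-type inequality between the binomial coefficients
`C_k = C(n−2, k−1)` and the logarithmic increments `L_k = ln(k+ω₀) − ln(k−1+ω₀)`:
`(n−1) · Σ C_m·L_m ≤ (Σ C_k) · (Σ L_m)`. -/
theorem stmt10 (n : ℕ) (hn : 2 ≤ n) (ω₀ : ℝ) (hω : 1 < ω₀) :
    ((n : ℝ) - 1) * ∑ m ∈ Finset.Icc 1 (n - 1),
        (Nat.choose (n - 2) (m - 1) : ℝ) *
          (Real.log ((m : ℝ) + ω₀) - Real.log ((m : ℝ) - 1 + ω₀)) ≤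
      (∑ k ∈ Finset.Icc 1 (n - 1), (Nat.choose (n - 2) (k - 1) : ℝ)) *
      (∑ m ∈ Finset.Icc 1 (n - 1),
        (Real.log ((m : ℝ) + ω₀) - Real.log ((m : ℝ) - 1 + ω₀))) := by
  set L : ℕ → ℝ := fun m => Real.log ((m : ℝ) + ω₀) - Real.log ((m : ℝ) - 1 + ω₀) with hL
  set C : ℕ → ℝ := fun m => (Nat.choose (n - 2) (m - 1) : ℝ) with hC
  set T : ℕ → ℝ := fun m => L m + L (n - m) with hT
  have hω0 : (0:ℝ) < ω₀ := by linarith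
  -- symmetry of C on the range
  have hCsymm : ∀ m ∈ Finset.Icc 1 (n-1), C (n - m) = C m := by
    intro m hm
    simp only [Finset.mem_Icc] at hm
    have h1 : n - m - 1 = (n - 2) - (m - 1) := by omega
    have h2 : m - 1 ≤ n - 2 := by omega
    simp only [hC, h1, Nat.choose_symm h2]
  -- 2 * Σ C L = Σ C T
  have key1 : 2 * (∑ m ∈ Finset.Icc 1 (n-1), C m * L m)
      = ∑ m ∈ Finset.Icc 1 (n-1), C m * T m := by
    have := sum_reflect n (fun m => C m * L m)
    calc 2 * (∑ m ∈ Finset.Icc 1 (n-1), C m * L m)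
        = (∑ m ∈ Finset.Icc 1 (n-1), C m * L m)
          + ∑ m ∈ Finset.Icc 1 (n-1), C (n-m) * L (n-m) := by rw [← this]; ring
      _ = (∑ m ∈ Finset.Icc 1 (n-1), C m * L m)
          + ∑ m ∈ Finset.Icc 1 (n-1), C m * L (n-m) := by
            congr 1
            refine Finset.sum_congr rfl fun m hm => by rw [hCsymm m hm]
      _ = ∑ m ∈ Finset.Icc 1 (n-1), C m * T m := by
            rw [← Finset.sum_add_distrib]
            exact Finset.sum_congr rfl fun m hm => by simp only [hT]; ring
  have key2 : 2 * (∑ m ∈ Finset.Icc 1 (n-1), L m)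
      = ∑ m ∈ Finset.Icc 1 (n-1), T m := by
    have := sum_reflect n L
    calc 2 * (∑ m ∈ Finset.Icc 1 (n-1), L m)
        = (∑ m ∈ Finset.Icc 1 (n-1), L m) + ∑ m ∈ Finset.Icc 1 (n-1), L (n-m) := by
          rw [← this]; ring
      _ = ∑ m ∈ Finset.Icc 1 (n-1), T m := by
          rw [← Finset.sum_add_distrib]
  -- Antivary
  have hanti : AntivaryOn C T ↑(Finset.Icc 1 (n-1)) := by
    intro k hk m hm hTkm
    simp only [Finset.coe_Icc, Set.mem_Icc] at hk hm
    -- real positivity facts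
    have hk1 : (1:ℝ) ≤ (k:ℝ) := by exact_mod_cast hk.1
    have hm1 : (1:ℝ) ≤ (m:ℝ) := by exact_mod_cast hm.1
    have hkn : (k:ℝ) ≤ (n:ℝ) - 1 := by
      have : (k:ℝ) ≤ ((n-1 : ℕ) : ℝ) := by exact_mod_cast hk.2
      rw [Nat.cast_sub (by omega)] at this; simpa using this
    have hmn : (m:ℝ) ≤ (n:ℝ) - 1 := by
      have : (m:ℝ) ≤ ((n-1 : ℕ) : ℝ) := by exact_mod_cast hm.2
      rw [Nat.cast_sub (by omega)] at this; simpa using this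
    -- T x = log (g x + c) - log (g x)
    have hTform : ∀ x : ℕ, 1 ≤ x → x ≤ n - 1 →
        T x = Real.log (((x:ℝ)-1+ω₀) * ((n:ℝ)-x-1+ω₀) + ((n:ℝ)-1+2*ω₀))
            - Real.log (((x:ℝ)-1+ω₀) * ((n:ℝ)-x-1+ω₀)) := by
      intro x hx1 hx2
      have hx1' : (1:ℝ) ≤ (x:ℝ) := by exact_mod_cast hx1
      have hxn : (x:ℝ) ≤ (n:ℝ) - 1 := by
        have : (x:ℝ) ≤ ((n-1 : ℕ) : ℝ) := by exact_mod_cast hx2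
        rw [Nat.cast_sub (by omega)] at this; simpa using this
      have hcast : ((n - x : ℕ) : ℝ) = (n:ℝ) - x := by
        rw [Nat.cast_sub (by omega)]
      have hp : (0:ℝ) < (x:ℝ) + ω₀ := by linarith
      have ha : (0:ℝ) < (x:ℝ) - 1 + ω₀ := by linarith
      have hq : (0:ℝ) < (n:ℝ) - x + ω₀ := by linarith
      have hb : (0:ℝ) < (n:ℝ) - x - 1 + ω₀ := by linarith
      have e1 : ((x:ℝ)+ω₀) * ((n:ℝ)-x+ω₀)
          = ((x:ℝ)-1+ω₀) * ((n:ℝ)-x-1+ω₀) + ((n:ℝ)-1+2*ω₀) := by ring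
      simp only [hT, hL, hcast]
      rw [← e1, Real.log_mul (ne_of_gt hp) (ne_of_gt hq),
        Real.log_mul (ne_of_gt ha) (ne_of_gt hb)]
      ring
    set gk : ℝ := ((k:ℝ)-1+ω₀) * ((n:ℝ)-k-1+ω₀) with hgk
    set gm : ℝ := ((m:ℝ)-1+ω₀) * ((n:ℝ)-m-1+ω₀) with hgm
    have hgk0 : 0 < gk := by
      apply mul_pos <;> [linarith; linarith]
    have hgm0 : 0 < gm := by
      apply mul_pos <;> [linarith; linarith]
    set c : ℝ := (n:ℝ)-1+2*ω₀ with hc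
    have hc0 : (0:ℝ) < c := by
      have h1n : (1:ℝ) ≤ (n:ℝ) := by exact_mod_cast (show 1 ≤ n by omega)
      simp only [hc]; linarith
    rw [hTform k hk.1 hk.2, hTform m hm.1 hm.2] at hTkm
    -- from T k < T m, deduce gm < gk
    have hgmk : gm < gk := by
      by_contra hcon
      push_neg at hcon
      have h1 : Real.log (gm + c) + Real.log gk ≤ Real.log (gk + c) + Real.log gm := by
        rw [← Real.log_mul (by positivity) (ne_of_gt hgk0),
          ← Real.log_mul (by positivity) (ne_of_gt hgm0)]
        apply Real.log_le_log (by positivity)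
        nlinarith
      simp only [← hgk, ← hgm, ← hc] at hTkm
      linarith
    -- gm < gk implies distance condition on integers
    have hr : ((2*(k:ℝ) - n)^2 : ℝ) ≤ (2*(m:ℝ) - n)^2 := by
      simp only [hgk, hgm] at hgmk
      nlinarith
    have hint : ((2*(k:ℤ) - n)^2 : ℤ) ≤ (2*(m:ℤ) - n)^2 := by exact_mod_cast hr
    have hdist : (2*((k-1 : ℕ) : ℤ) - ((n-2 : ℕ) : ℤ))^2 ≤ (2*((m-1 : ℕ) : ℤ) - ((n-2 : ℕ) : ℤ))^2 := by
      push_cast [Nat.cast_sub (show 1 ≤ k from hk.1), Nat.cast_sub (show 1 ≤ m from hm.1),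
        Nat.cast_sub (show 2 ≤ n from hn)]
      linear_combination hint
    have : Nat.choose (n-2) (m-1) ≤ Nat.choose (n-2) (k-1) :=
      choose_dist (by omega) (by omega) hdist
    simp only [hC]
    exact_mod_cast this
  have cheb := hanti.card_mul_sum_le_sum_mul_sum
  have hcard : ((Finset.Icc 1 (n-1)).card : ℝ) = (n:ℝ) - 1 := by
    rw [Nat.card_Icc]
    have h1 : n - 1 + 1 - 1 = n - 1 := by omega
    rw [h1, Nat.cast_sub (show 1 ≤ n by omega)]
    simp
  rw [hcard] at cheb
  -- combine
  have final : ((n:ℝ) - 1) * (2 * ∑ m ∈ Finset.Icc 1 (n-1), C m * L m)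
      ≤ (∑ k ∈ Finset.Icc 1 (n-1), C k) * (2 * ∑ m ∈ Finset.Icc 1 (n-1), L m) := by
    rw [key1, key2]
    exact cheb
  simp only [hC, hL] at final ⊢
  linarith
end

section
/- For every integer n ≥ 4, the third derivative of J̃ is strictly positive on [0, v̄]: J̃'''(v) > 0 for all v ∈ [0, v̄]. -/
open Real Finset

/-- Bernstein-basis polynomial combination with coefficients `a`. -/
noncomputable def bsum (k : ℕ) (a : ℕ → ℝ) : Polynomial ℝ :=
  ∑ m ∈ Finset.range (k + 1), Polynomial.C (a m) * bernsteinPolynomial ℝ k m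

lemma bsum_deriv (k : ℕ) (a : ℕ → ℝ) :
    Polynomial.derivative (bsum (k + 1) a)
      = bsum k (fun m => ((k : ℝ) + 1) * (a (m + 1) - a m)) := by
  unfold bsum
  rw [map_sum]
  have hterm : ∀ m, Polynomial.derivative (Polynomial.C (a m) * bernsteinPolynomial ℝ (k+1) m)
      = Polynomial.C (a m) * Polynomial.derivative (bernsteinPolynomial ℝ (k+1) m) := by
    intro m; rw [Polynomial.derivative_C_mul]
  simp only [hterm]
  rw [Finset.sum_range_succ']
  set g : ℕ → Polynomial ℝ :=
    fun m => Polynomial.C (((k:ℝ)+1) * a m) * bernsteinPolynomial ℝ k m with hg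
  have hsucc : ∀ ν, Polynomial.C (a (ν+1)) *
        Polynomial.derivative (bernsteinPolynomial ℝ (k+1) (ν+1))
      = Polynomial.C (((k:ℝ)+1) * a (ν+1)) * bernsteinPolynomial ℝ k ν - g (ν+1) := by
    intro ν
    rw [bernsteinPolynomial.derivative_succ]
    simp only [hg, Nat.add_sub_cancel, map_mul, map_add, map_sub, Polynomial.C_eq_natCast,
      Polynomial.C_1]
    push_cast
    ring
  have hzero : Polynomial.C (a 0) * Polynomial.derivative (bernsteinPolynomial ℝ (k+1) 0)
      = - g 0 := by
    rw [bernsteinPolynomial.derivative_zero]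
    simp only [hg, Nat.add_sub_cancel, map_mul, map_add, map_sub, Polynomial.C_eq_natCast,
      Polynomial.C_1]
    push_cast
    ring
  rw [hzero]
  simp only [hsucc]
  rw [Finset.sum_sub_distrib]
  have htel : ∑ ν ∈ Finset.range (k+1), g (ν+1) = ∑ m ∈ Finset.range (k+1), g m - g 0 := by
    have h2 : ∑ m ∈ Finset.range (k+2), g m = (∑ ν ∈ Finset.range (k+1), g (ν+1)) + g 0 :=
      Finset.sum_range_succ' g (k+1)
    have h3 : ∑ m ∈ Finset.range (k+2), g m = ∑ m ∈ Finset.range (k+1), g m := by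
      rw [Finset.sum_range_succ]
      simp [hg, bernsteinPolynomial.eq_zero_of_lt ℝ (Nat.lt_succ_self k)]
    rw [h3] at h2
    exact eq_sub_of_add_eq h2.symm
  rw [htel]
  have hsplit : ∑ x ∈ Finset.range (k+1),
      Polynomial.C (((k:ℝ)+1) * (a (x+1) - a x)) * bernsteinPolynomial ℝ k x
      = (∑ x ∈ Finset.range (k+1),
          Polynomial.C (((k:ℝ)+1) * a (x+1)) * bernsteinPolynomial ℝ k x)
        - ∑ x ∈ Finset.range (k+1), g x := by
    rw [← Finset.sum_sub_distrib]
    apply Finset.sum_congr rfl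
    intro x _
    simp only [hg, map_mul, map_sub, map_add]
    ring
  rw [hsplit]
  ring

lemma log_diff3_pos {t : ℝ} (ht : 0 < t) :
    0 < Real.log (t+3) - 3 * Real.log (t+2) + 3 * Real.log (t+1) - Real.log t := by
  have h1 : Real.log t + 3 * Real.log (t+2) = Real.log (t * (t+2)^3) := by
    rw [Real.log_mul (by positivity) (by positivity), Real.log_pow]
    push_cast; ring
  have h2 : Real.log (t+3) + 3 * Real.log (t+1) = Real.log ((t+3) * (t+1)^3) := by
    rw [Real.log_mul (by positivity) (by positivity), Real.log_pow]
    push_cast; ring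
  have h3 : Real.log (t * (t+2)^3) < Real.log ((t+3) * (t+1)^3) := by
    apply Real.log_lt_log (by positivity)
    nlinarith [ht]
  linarith

lemma bern_eval_nonneg (k m : ℕ) {x : ℝ} (h0 : 0 ≤ x) (h1 : x ≤ 1) :
    0 ≤ (bernsteinPolynomial ℝ k m).eval x := by
  have h : (bernsteinPolynomial ℝ k m).eval x
      = (Nat.choose k m : ℝ) * x ^ m * (1 - x) ^ (k - m) := by
    simp [bernsteinPolynomial]
  rw [h]
  have : 0 ≤ 1 - x := by linarith
  positivity

lemma bern_eval_sum (k : ℕ) (x : ℝ) :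
    ∑ m ∈ Finset.range (k+1), (bernsteinPolynomial ℝ k m).eval x = 1 := by
  rw [← Polynomial.eval_finset_sum, bernsteinPolynomial.sum, Polynomial.eval_one]

lemma bsum_eval_pos (k : ℕ) (a : ℕ → ℝ) (ha : ∀ m, 0 < a m) {x : ℝ}
    (h0 : 0 ≤ x) (h1 : x ≤ 1) : 0 < (bsum k a).eval x := by
  unfold bsum
  rw [Polynomial.eval_finset_sum]
  simp only [Polynomial.eval_mul, Polynomial.eval_C]
  apply Finset.sum_pos'
  · intro i _; exact mul_nonneg (ha i).le (bern_eval_nonneg k i h0 h1)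
  · obtain ⟨i, hi, hipos⟩ : ∃ i ∈ Finset.range (k+1),
        0 < (bernsteinPolynomial ℝ k i).eval x := by
      by_contra h
      push_neg at h
      have hs : ∑ m ∈ Finset.range (k+1), (bernsteinPolynomial ℝ k m).eval x ≤ 0 :=
        Finset.sum_nonpos fun m hm => h m hm
      rw [bern_eval_sum] at hs; linarith
    exact ⟨i, hi, mul_pos (ha i) hipos⟩

/-- For every integer `n ≥ 4`, the third derivative of `J̃` is strictly positive
on `[0, v̄]`. -/
theorem stmt11 (n : ℕ) (hn : 4 ≤ n) (ω₀ vbar : ℝ) (hω : 1 < ω₀) (hv : 0 < vbar) :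
    ∀ v ∈ Set.Icc (0 : ℝ) vbar, 0 < deriv (deriv (deriv (Jt n ω₀ vbar))) v := by
  obtain ⟨N, rfl⟩ : ∃ N, n = N + 4 := ⟨n - 4, by omega⟩
  rintro v ⟨hv0, hv1⟩
  set a : ℕ → ℝ := fun m => Real.log ((m : ℝ) + ω₀) with ha
  set P : Polynomial ℝ := bsum (N+3) a with hP
  set Q : Polynomial ℝ := P.comp (Polynomial.C vbar⁻¹ * Polynomial.X) with hQ
  have hJt : Jt (N+4) ω₀ vbar = fun w => Q.eval w := by
    funext w
    rw [hQ, Polynomial.eval_comp]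
    have hxw : (Polynomial.C vbar⁻¹ * Polynomial.X).eval w = vbar⁻¹ * w := by simp
    rw [hxw, hP]
    unfold bsum Jt
    rw [Polynomial.eval_finset_sum]
    apply Finset.sum_congr rfl
    intro m _
    have hb : (bernsteinPolynomial ℝ (N+3) m).eval (vbar⁻¹ * w)
        = (Nat.choose (N+3) m : ℝ) * (vbar⁻¹ * w) ^ m * (1 - vbar⁻¹ * w) ^ (N+3 - m) := by
      simp [bernsteinPolynomial]
    rw [Polynomial.eval_mul, Polynomial.eval_C, hb, ha]
    have hdiv : w / vbar = vbar⁻¹ * w := by rw [div_eq_inv_mul]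
    have h1 : N + 4 - 1 = N + 3 := rfl
    rw [h1, hdiv]
    ring
  rw [hJt]
  have hd : ∀ q : Polynomial ℝ, (deriv fun w => q.eval w) = fun w => q.derivative.eval w := by
    intro q; funext w; exact Polynomial.deriv (𝕜 := ℝ) (p := q)
  rw [hd, hd, hd]
  have hcomp : ∀ p : Polynomial ℝ,
      Polynomial.derivative (p.comp (Polynomial.C vbar⁻¹ * Polynomial.X))
        = Polynomial.C vbar⁻¹ *
            (Polynomial.derivative p).comp (Polynomial.C vbar⁻¹ * Polynomial.X) := by
    intro p
    rw [Polynomial.derivative_comp, Polynomial.derivative_C_mul, Polynomial.derivative_X,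
      mul_one]
  have e3 : Q.derivative.derivative.derivative
      = Polynomial.C vbar⁻¹ * (Polynomial.C vbar⁻¹ * (Polynomial.C vbar⁻¹ *
          ((P.derivative.derivative.derivative).comp (Polynomial.C vbar⁻¹ * Polynomial.X)))) := by
    have d1 : Polynomial.derivative Q
        = Polynomial.C vbar⁻¹ *
            (Polynomial.derivative P).comp (Polynomial.C vbar⁻¹ * Polynomial.X) := by
      rw [hQ, hcomp]
    rw [d1, Polynomial.derivative_C_mul, hcomp, Polynomial.derivative_C_mul,
      Polynomial.derivative_C_mul, hcomp]
  rw [e3]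
  simp only [Polynomial.eval_mul, Polynomial.eval_C, Polynomial.eval_comp, Polynomial.eval_X]
  -- the third derivative of P
  set a1 : ℕ → ℝ := fun m => (((N+2 : ℕ) : ℝ) + 1) * (a (m+1) - a m) with ha1
  set a2 : ℕ → ℝ := fun m => (((N+1 : ℕ) : ℝ) + 1) * (a1 (m+1) - a1 m) with ha2
  set a3 : ℕ → ℝ := fun m => ((N : ℝ) + 1) * (a2 (m+1) - a2 m) with ha3
  have hP1 : Polynomial.derivative P = bsum (N+2) a1 := bsum_deriv (N+2) a
  have hP2 : Polynomial.derivative (bsum (N+2) a1) = bsum (N+1) a2 := bsum_deriv (N+1) a1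
  have hP3 : Polynomial.derivative (bsum (N+1) a2) = bsum N a3 := bsum_deriv N a2
  rw [hP1, hP2, hP3]
  have ha3pos : ∀ m, 0 < a3 m := by
    intro m
    have ht : (0:ℝ) < (m : ℝ) + ω₀ := by
      have : (0:ℝ) ≤ (m:ℝ) := Nat.cast_nonneg m
      linarith
    have hD := log_diff3_pos ht
    have l1 : a (m+1) = Real.log (((m:ℝ) + ω₀) + 1) := by rw [ha]; push_cast; ring_nf
    have l2 : a (m+2) = Real.log (((m:ℝ) + ω₀) + 2) := by rw [ha]; push_cast; ring_nf
    have l3 : a (m+3) = Real.log (((m:ℝ) + ω₀) + 3) := by rw [ha]; push_cast; ring_nf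
    have hexp : a3 m = ((N:ℝ)+1) * ((N:ℝ)+2) * ((N:ℝ)+3) *
        (a (m+3) - 3 * a (m+2) + 3 * a (m+1) - a m) := by
      rw [ha3, ha2, ha1]
      simp only []
      push_cast
      have e1 : m + 1 + 1 + 1 = m + 3 := by omega
      have e2 : m + 1 + 1 = m + 2 := by omega
      rw [e1, e2]
      ring
    rw [hexp, l1, l2, l3]
    have hN1 : (0:ℝ) < (N:ℝ) + 1 := by positivity
    have hN2 : (0:ℝ) < (N:ℝ) + 2 := by positivity
    have hN3 : (0:ℝ) < (N:ℝ) + 3 := by positivity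
    have hDD : 0 < Real.log (((m:ℝ) + ω₀) + 3) - 3 * Real.log (((m:ℝ) + ω₀) + 2)
        + 3 * Real.log (((m:ℝ) + ω₀) + 1) - Real.log ((m:ℝ) + ω₀) := hD
    have := mul_pos (mul_pos (mul_pos hN1 hN2) hN3) hDD
    -- a m = log ((m:ℝ) + ω₀)
    have hma : a m = Real.log ((m:ℝ) + ω₀) := rfl
    rw [hma]
    nlinarith [this]
  have hx0 : 0 ≤ vbar⁻¹ * v := by positivity
  have hx1 : vbar⁻¹ * v ≤ 1 := by
    rw [← div_eq_inv_mul]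
    exact (div_le_one hv).mpr hv1
  have hpos := bsum_eval_pos N a3 ha3pos hx0 hx1
  have hvinv : 0 < vbar⁻¹ := by positivity
  positivity
end

section
/- For every integer n ≥ 2 and every v ∈ (0, v̄]: J̃(v)/v > J̃'(v). -/
open Real Finset

private lemma cast_pow_pred (m : ℕ) (x : ℝ) : (m:ℝ) * x^(m-1) * x = (m:ℝ) * x^m := by
  cases m with
  | zero => simp
  | succ k => push_cast; rw [pow_succ]; ring

private lemma log_key (ω₀ : ℝ) (hω : 1 < ω₀) (i : ℕ) :
    (i:ℝ) * Real.log ((i:ℝ) + 1 + ω₀) < ((i:ℝ) + 1) * Real.log ((i:ℝ) + ω₀) := by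
  have hi0 : (0:ℝ) ≤ (i:ℝ) := Nat.cast_nonneg i
  have ha : (0:ℝ) < (i:ℝ) + ω₀ := by linarith
  have hΔ : Real.log ((i:ℝ) + 1 + ω₀) - Real.log ((i:ℝ) + ω₀) ≤ 1 / ((i:ℝ) + ω₀) := by
    rw [← Real.log_div (by linarith) (ne_of_gt ha)]
    have := Real.log_le_sub_one_of_pos (show (0:ℝ) < ((i:ℝ)+1+ω₀)/((i:ℝ)+ω₀) by positivity)
    have heq : ((i:ℝ)+1+ω₀)/((i:ℝ)+ω₀) - 1 = 1/((i:ℝ)+ω₀) := by field_simp; ring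
    linarith
  have hlog1 : 1 - 1/((i:ℝ)+1) ≤ Real.log ((i:ℝ)+1) := by
    have h := Real.log_le_sub_one_of_pos (show (0:ℝ) < 1/((i:ℝ)+1) by positivity)
    rw [one_div, Real.log_inv] at h
    simp only [one_div]
    linarith
  have hlt : Real.log ((i:ℝ)+1) < Real.log ((i:ℝ)+ω₀) :=
    Real.log_lt_log (by linarith) (by linarith)
  have h2 : (i:ℝ)/((i:ℝ)+ω₀) < Real.log ((i:ℝ)+ω₀) := by
    have h3 : (i:ℝ)/((i:ℝ)+ω₀) ≤ (i:ℝ)/((i:ℝ)+1) := by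
      rw [div_le_div_iff₀ ha (by linarith)]; nlinarith
    have h4 : (i:ℝ)/((i:ℝ)+1) = 1 - 1/((i:ℝ)+1) := by field_simp; ring
    linarith
  have h5 : (i:ℝ) * (Real.log ((i:ℝ)+1+ω₀) - Real.log ((i:ℝ)+ω₀)) ≤ (i:ℝ) * (1/((i:ℝ)+ω₀)) :=
    mul_le_mul_of_nonneg_left hΔ hi0
  have h6 : (i:ℝ) * (1/((i:ℝ)+ω₀)) = (i:ℝ)/((i:ℝ)+ω₀) := by ring
  nlinarith

lemma hasDerivAt_Jt (n : ℕ) (ω₀ vbar : ℝ) (v : ℝ) :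
    HasDerivAt (Jt n ω₀ vbar)
      (∑ m ∈ Finset.range n,
        ((Nat.choose (n - 1) m : ℝ) * Real.log ((m : ℝ) + ω₀) *
            ((m : ℝ) * (v / vbar) ^ (m - 1) * (1 / vbar)) * (1 - v / vbar) ^ (n - 1 - m)
          + (Nat.choose (n - 1) m : ℝ) * Real.log ((m : ℝ) + ω₀) * (v / vbar) ^ m *
            (((n - 1 - m : ℕ) : ℝ) * (1 - v / vbar) ^ (n - 1 - m - 1) * (-(1 / vbar))))) v := by
  have hJ : Jt n ω₀ vbar = fun v => ∑ m ∈ Finset.range n,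
      (Nat.choose (n - 1) m : ℝ) * Real.log ((m : ℝ) + ω₀) *
        (v / vbar) ^ m * (1 - v / vbar) ^ (n - 1 - m) := rfl
  rw [hJ]
  apply HasDerivAt.fun_sum
  intro m _
  have h1 : HasDerivAt (fun y : ℝ => y / vbar) (1 / vbar) v := by
    simpa using (hasDerivAt_id v).div_const vbar
  have h2 : HasDerivAt (fun y : ℝ => (Nat.choose (n - 1) m : ℝ) * Real.log ((m : ℝ) + ω₀) * (y / vbar) ^ m)
      ((Nat.choose (n - 1) m : ℝ) * Real.log ((m : ℝ) + ω₀) * ((m : ℝ) * (v / vbar) ^ (m - 1) * (1 / vbar))) v := by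
    exact ((h1.pow m).const_mul _)
  have h3 : HasDerivAt (fun y : ℝ => 1 - y / vbar) (-(1 / vbar)) v := h1.const_sub 1
  have h4 : HasDerivAt (fun y : ℝ => (1 - y / vbar) ^ (n - 1 - m))
      (((n - 1 - m : ℕ) : ℝ) * (1 - v / vbar) ^ (n - 1 - m - 1) * (-(1 / vbar))) v := h3.pow _
  exact h2.mul h4

/-- For every integer `n ≥ 2` and every `v ∈ (0, v̄]`: `J̃(v)/v > J̃'(v)`. -/
theorem stmt12 (n : ℕ) (hn : 2 ≤ n) (ω₀ vbar : ℝ) (hω : 1 < ω₀) (hv : 0 < vbar) :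
    ∀ v ∈ Set.Ioc (0 : ℝ) vbar, deriv (Jt n ω₀ vbar) v < Jt n ω₀ vbar v / v := by
  intro v hvmem
  obtain ⟨hv0, hvle⟩ := hvmem
  have hvbar : vbar ≠ 0 := ne_of_gt hv
  set N := n - 1 with hNdef
  have hN1 : 1 ≤ N := by omega
  have hn1 : N + 1 = n := by omega
  set x := v / vbar with hxdef
  have hx0 : 0 < x := div_pos hv0 hv
  have hx1 : x ≤ 1 := (div_le_one hv).mpr hvle
  have hveq : v = x * vbar := by rw [hxdef, div_mul_cancel₀ v hvbar]
  set c : ℕ → ℝ := fun m => (Nat.choose N m : ℝ) * Real.log ((m:ℝ) + ω₀) with hc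
  have hJd : deriv (Jt n ω₀ vbar) v = ∑ m ∈ Finset.range n,
      (c m * ((m : ℝ) * x ^ (m - 1) * (1 / vbar)) * (1 - x) ^ (N - m)
        + c m * x ^ m * (((N - m : ℕ) : ℝ) * (1 - x) ^ (N - m - 1) * (-(1 / vbar)))) :=
    (hasDerivAt_Jt n ω₀ vbar v).deriv
  rw [lt_div_iff₀ hv0, hJd, ← sub_pos]
  have hJt : Jt n ω₀ vbar v = ∑ m ∈ Finset.range n, c m * x ^ m * (1 - x) ^ (N - m) := rfl
  rw [hJt]
  have key : (∑ m ∈ Finset.range n, c m * x ^ m * (1 - x) ^ (N - m))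
      - (∑ m ∈ Finset.range n,
          (c m * ((m : ℝ) * x ^ (m - 1) * (1 / vbar)) * (1 - x) ^ (N - m)
            + c m * x ^ m * (((N - m : ℕ) : ℝ) * (1 - x) ^ (N - m - 1) * (-(1 / vbar))))) * v
      = c 0 * (1 - x) ^ N
        + ∑ i ∈ Finset.range N,
            ((((N:ℝ) - i) * c i - (i:ℝ) * c (i+1)) * x ^ (i+1) * (1 - x) ^ (N - i - 1)) := by
    rw [Finset.sum_mul, ← Finset.sum_sub_distrib]
    have hterm : ∀ m ∈ Finset.range n,
        (c m * x ^ m * (1 - x) ^ (N - m)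
          - (c m * ((m : ℝ) * x ^ (m - 1) * (1 / vbar)) * (1 - x) ^ (N - m)
              + c m * x ^ m * (((N - m : ℕ) : ℝ) * (1 - x) ^ (N - m - 1) * (-(1 / vbar)))) * v)
        = (c m * (1 - (m:ℝ)) * x ^ m * (1 - x) ^ (N - m)
            + c m * ((N - m : ℕ) : ℝ) * x ^ (m+1) * (1 - x) ^ (N - m - 1)) := by
      intro m _
      rw [hveq]
      have hp := cast_pow_pred m x
      have hvv : (1/vbar) * vbar = 1 := by field_simp
      linear_combination (-(c m * (1 - x)^(N - m))) * hp - c m * (1 - x)^(N - m) * (m:ℝ) * x^(m-1) * x * hvv + c m * x^(m+1) * ((N - m : ℕ) : ℝ) * (1 - x)^(N - m - 1) * hvv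
    rw [Finset.sum_congr rfl hterm, Finset.sum_add_distrib]
    rw [← hn1]
    rw [Finset.sum_range_succ' (fun m => c m * (1 - (m:ℝ)) * x ^ m * (1 - x) ^ (N - m)) N]
    rw [Finset.sum_range_succ (fun m => c m * ((N - m : ℕ) : ℝ) * x ^ (m+1) * (1 - x) ^ (N - m - 1)) N]
    have hBN : c N * ((N - N : ℕ) : ℝ) * x ^ (N+1) * (1 - x) ^ (N - N - 1) = 0 := by simp
    rw [hBN, add_zero]
    have hcomb : (∑ i ∈ Finset.range N, c (i+1) * (1 - ((i+1 : ℕ):ℝ)) * x ^ (i+1) * (1 - x) ^ (N - (i+1)))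
        + (∑ m ∈ Finset.range N, c m * ((N - m : ℕ) : ℝ) * x ^ (m+1) * (1 - x) ^ (N - m - 1))
        = ∑ i ∈ Finset.range N,
            ((((N:ℝ) - i) * c i - (i:ℝ) * c (i+1)) * x ^ (i+1) * (1 - x) ^ (N - i - 1)) := by
      rw [← Finset.sum_add_distrib]
      apply Finset.sum_congr rfl
      intro i hi
      have hiN : i < N := Finset.mem_range.mp hi
      have hsub : N - (i+1) = N - i - 1 := by omega
      rw [hsub]
      have hcast : ((N - i : ℕ) : ℝ) = (N:ℝ) - (i:ℝ) := by
        rw [Nat.cast_sub hiN.le]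
      rw [hcast]
      push_cast
      ring
    have hA0 : c 0 * (1 - ((0:ℕ):ℝ)) * x ^ (0:ℕ) * (1 - x) ^ (N - 0) = c 0 * (1 - x) ^ N := by
      simp
    rw [hA0] at *
    linarith [hcomb]
  rw [key]
  have hc0 : 0 < c 0 := by
    simp only [hc, Nat.choose_zero_right, Nat.cast_one, Nat.cast_zero, one_mul, zero_add]
    exact Real.log_pos hω
  have h1x : 0 ≤ 1 - x := by linarith
  have hw : ∀ i, i < N → 0 < ((N:ℝ) - i) * c i - (i:ℝ) * c (i+1) := by
    intro i hiN
    have hch : ((N:ℝ) - (i:ℝ)) * (Nat.choose N i : ℝ) = ((i:ℝ) + 1) * (Nat.choose N (i+1) : ℝ) := by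
      have h := Nat.choose_succ_right_eq N i
      have : ((Nat.choose N (i+1) : ℕ) : ℝ) * ((i:ℝ) + 1) = (Nat.choose N i : ℝ) * ((N:ℝ) - (i:ℝ)) := by
        rw [← Nat.cast_sub hiN.le]
        exact_mod_cast congrArg (Nat.cast : ℕ → ℝ) h
      linarith [this]
    have hkey := log_key ω₀ hω i
    have hchpos : (0:ℝ) < (Nat.choose N (i+1) : ℝ) := by
      exact_mod_cast Nat.choose_pos (by omega : i + 1 ≤ N)
    have hexp : ((N:ℝ) - i) * c i - (i:ℝ) * c (i+1)
        = (Nat.choose N (i+1) : ℝ) * (((i:ℝ) + 1) * Real.log ((i:ℝ) + ω₀) - (i:ℝ) * Real.log ((i:ℝ) + 1 + ω₀)) := by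
      simp only [hc]
      push_cast
      linear_combination Real.log ((i:ℝ) + ω₀) * hch
    rw [hexp]
    exact mul_pos hchpos (by linarith [hkey])
  apply add_pos_of_nonneg_of_pos
  · exact mul_nonneg hc0.le (pow_nonneg h1x N)
  · apply Finset.sum_pos'
    · intro i hi
      have h := hw i (Finset.mem_range.mp hi)
      exact mul_nonneg (mul_nonneg h.le (pow_nonneg hx0.le _)) (pow_nonneg h1x _)
    · refine ⟨N - 1, Finset.mem_range.mpr (by omega), ?_⟩
      have h1 : N - 1 + 1 = N := by omega
      have h2 : N - (N - 1) - 1 = 0 := by omega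
      rw [h1, h2, pow_zero, mul_one]
      have h := hw (N - 1) (by omega)
      rw [h1] at h
      exact mul_pos h (pow_pos hx0 N)
end

section
/- For every integer n ≥ 3 and every v ∈ [0, v̄]: 3·J̃''(v) + v·J̃'''(v) < 0. -/
open Real Finset

namespace S13

/-- Bernstein-type sum. -/
noncomputable def S (c : ℕ → ℝ) (N : ℕ) (x : ℝ) : ℝ :=
  ∑ m ∈ Finset.range (N + 1), (Nat.choose N m : ℝ) * c m * x ^ m * (1 - x) ^ (N - m)

/-- Forward difference. -/
noncomputable def D (c : ℕ → ℝ) (m : ℕ) : ℝ := c (m + 1) - c m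

lemma S_zero (c : ℕ → ℝ) (x : ℝ) : S c 0 x = c 0 := by simp [S]

lemma hasDerivAt_S (c : ℕ → ℝ) (N : ℕ) (x : ℝ) :
    HasDerivAt (S c (N + 1)) (((N : ℝ) + 1) * S (D c) N x) x := by
  have hterm : ∀ m ∈ Finset.range (N + 2), HasDerivAt
      (fun y : ℝ => (Nat.choose (N + 1) m : ℝ) * c m * y ^ m * (1 - y) ^ (N + 1 - m))
      ((Nat.choose (N + 1) m : ℝ) * c m * ((m : ℝ) * x ^ (m - 1)) * (1 - x) ^ (N + 1 - m)
        + (Nat.choose (N + 1) m : ℝ) * c m * x ^ m *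
          (-(((N + 1 - m : ℕ) : ℝ) * (1 - x) ^ (N - m)))) x := by
    intro m _
    have h1 : HasDerivAt (fun y : ℝ => (Nat.choose (N + 1) m : ℝ) * c m * y ^ m)
        ((Nat.choose (N + 1) m : ℝ) * c m * ((m : ℝ) * x ^ (m - 1))) x := by
      simpa [mul_assoc] using
        (hasDerivAt_pow m x).const_mul ((Nat.choose (N + 1) m : ℝ) * c m)
    have hb : HasDerivAt (fun y : ℝ => 1 - y) (-1 : ℝ) x := by
      simpa using (hasDerivAt_id x).const_sub 1
    have h2 : HasDerivAt (fun y : ℝ => (1 - y) ^ (N + 1 - m))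
        (-(((N + 1 - m : ℕ) : ℝ) * (1 - x) ^ (N - m))) x := by
      have h := (hasDerivAt_pow (N + 1 - m) (1 - x)).comp x hb
      have he : N + 1 - m - 1 = N - m := by omega
      rw [he] at h
      simpa [Function.comp_def] using h
    exact h1.mul h2
  have h := HasDerivAt.sum hterm
  have hkey : (∑ m ∈ Finset.range (N + 2),
      ((Nat.choose (N + 1) m : ℝ) * c m * ((m : ℝ) * x ^ (m - 1)) * (1 - x) ^ (N + 1 - m)
        + (Nat.choose (N + 1) m : ℝ) * c m * x ^ m *
          (-(((N + 1 - m : ℕ) : ℝ) * (1 - x) ^ (N - m)))))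
      = ((N : ℝ) + 1) * S (D c) N x := by
    rw [Finset.sum_add_distrib]
    have hP : ∑ m ∈ Finset.range (N + 2),
        (Nat.choose (N + 1) m : ℝ) * c m * ((m : ℝ) * x ^ (m - 1)) * (1 - x) ^ (N + 1 - m)
        = ∑ k ∈ Finset.range (N + 1),
          ((N : ℝ) + 1) * ((Nat.choose N k : ℝ) * c (k + 1) * x ^ k * (1 - x) ^ (N - k)) := by
      rw [Finset.sum_range_succ']
      simp only [Nat.cast_zero, zero_mul, mul_zero, add_zero]
      refine Finset.sum_congr rfl fun k _ => ?_
      have hc : ((N : ℝ) + 1) * (Nat.choose N k : ℝ)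
          = (Nat.choose (N + 1) (k + 1) : ℝ) * ((k : ℝ) + 1) := by
        exact_mod_cast Nat.add_one_mul_choose_eq N k
      have e2 : N + 1 - (k + 1) = N - k := by omega
      rw [e2, Nat.add_sub_cancel]
      push_cast
      linear_combination (-(c (k + 1) * x ^ k * (1 - x) ^ (N - k))) * hc
    have hQ : ∑ m ∈ Finset.range (N + 2),
        (Nat.choose (N + 1) m : ℝ) * c m * x ^ m * (-(((N + 1 - m : ℕ) : ℝ) * (1 - x) ^ (N - m)))
        = ∑ m ∈ Finset.range (N + 1),
          -(((N : ℝ) + 1) * ((Nat.choose N m : ℝ) * c m * x ^ m * (1 - x) ^ (N - m))) := by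
      rw [Finset.sum_range_succ]
      have h0 : (N + 1 - (N + 1) : ℕ) = 0 := by omega
      rw [h0]
      simp only [Nat.cast_zero, zero_mul, neg_zero, mul_zero, add_zero]
      refine Finset.sum_congr rfl fun m _ => ?_
      have hc : (Nat.choose N m : ℝ) * ((N : ℝ) + 1)
          = (Nat.choose (N + 1) m : ℝ) * ((N + 1 - m : ℕ) : ℝ) := by
        exact_mod_cast Nat.choose_mul_succ_eq N m
      linear_combination (c m * x ^ m * (1 - x) ^ (N - m)) * hc
    rw [hP, hQ, ← Finset.sum_add_distrib]
    unfold S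
    rw [Finset.mul_sum]
    refine Finset.sum_congr rfl fun k _ => ?_
    simp only [D]
    ring
  rw [hkey] at h
  have hS : S c (N + 1) = ∑ i ∈ Finset.range (N + 2),
      fun y : ℝ => (Nat.choose (N + 1) i : ℝ) * c i * y ^ i * (1 - y) ^ (N + 1 - i) := by
    ext y
    simp only [S, Finset.sum_apply]
  rw [hS]
  exact h

lemma hasDerivAt_T (vbar : ℝ) (c : ℕ → ℝ) (N : ℕ) (v : ℝ) :
    HasDerivAt (fun w => S c (N + 1) (w / vbar))
      (((N : ℝ) + 1) * S (D c) N (v / vbar) * (1 / vbar)) v := by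
  have h := (hasDerivAt_S c N (v / vbar)).comp v ((hasDerivAt_id v).div_const vbar)
  simpa [Function.comp_def] using h

lemma Lr_neg (u : ℝ) (hu : 0 < u) :
    Real.log (u + 2) - 2 * Real.log (u + 1) + Real.log u < 0 := by
  have h1 : Real.log (u + 2) + Real.log u = Real.log ((u + 2) * u) :=
    (Real.log_mul (by positivity) (by positivity)).symm
  have h2 : Real.log ((u + 2) * u) < Real.log ((u + 1) ^ 2) := by
    apply Real.log_lt_log (by positivity)
    nlinarith
  have h3 : Real.log ((u + 1) ^ 2) = 2 * Real.log (u + 1) := by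
    rw [Real.log_pow]; push_cast; ring
  linarith

lemma Lr_le (u : ℝ) (hu : 0 < u) :
    Real.log (u + 2) - 2 * Real.log (u + 1) + Real.log u ≤ -(1 / (u + 1) ^ 2) := by
  have h0 : (0 : ℝ) < (u + 2) * u / (u + 1) ^ 2 := by positivity
  have hlog := Real.log_le_sub_one_of_pos h0
  have hexp : Real.log ((u + 2) * u / (u + 1) ^ 2)
      = Real.log (u + 2) + Real.log u - 2 * Real.log (u + 1) := by
    rw [Real.log_div (by positivity) (by positivity),
      Real.log_mul (by positivity) (by positivity), Real.log_pow]
    push_cast; ring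
  have he : (u + 2) * u / (u + 1) ^ 2 - 1 = -(1 / (u + 1) ^ 2) := by
    field_simp; ring
  rw [hexp, he] at hlog
  linarith

lemma Lr_ge (u : ℝ) (hu : 0 < u) :
    -(1 / (u * (u + 2))) ≤ Real.log (u + 2) - 2 * Real.log (u + 1) + Real.log u := by
  have h0 : (0 : ℝ) < (u + 2) * u / (u + 1) ^ 2 := by positivity
  have hlog := Real.one_sub_inv_le_log_of_pos h0
  have hexp : Real.log ((u + 2) * u / (u + 1) ^ 2)
      = Real.log (u + 2) + Real.log u - 2 * Real.log (u + 1) := by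
    rw [Real.log_div (by positivity) (by positivity),
      Real.log_mul (by positivity) (by positivity), Real.log_pow]
    push_cast; ring
  have he : 1 - ((u + 2) * u / (u + 1) ^ 2)⁻¹ = -(1 / (u * (u + 2))) := by
    rw [inv_div]
    field_simp
    ring
  rw [hexp, he] at hlog
  linarith

/-- The key coefficient inequality. -/
lemma ck_neg (ω : ℝ) (hω : 1 < ω) (a : ℕ → ℝ) (ha : ∀ m, a m = Real.log ((m : ℝ) + ω))
    (k : ℕ) :
    ((k : ℝ) + 3) * D (D a) k - (k : ℝ) * D (D a) (k - 1) < 0 := by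
  cases k with
  | zero =>
      have h := Lr_neg ω (by linarith)
      simp only [D, ha, Nat.cast_zero, Nat.cast_one, Nat.cast_ofNat, zero_mul, sub_zero]
      push_cast
      ring_nf
      ring_nf at h
      linarith
  | succ j =>
      set u : ℝ := (j : ℝ) + ω with hu_def
      have hu : 0 < u := by positivity
      have hu1 : (j : ℝ) + 1 < u := by
        have : (0:ℝ) ≤ (j:ℝ) := Nat.cast_nonneg j
        simp only [hu_def]; linarith
      have eL1 : D (D a) (j + 1)
          = Real.log ((u + 1) + 2) - 2 * Real.log ((u + 1) + 1) + Real.log (u + 1) := by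
        simp only [D, ha]
        push_cast
        ring_nf
        rw [hu_def]
        ring_nf
      have eL0 : D (D a) (j + 1 - 1)
          = Real.log (u + 2) - 2 * Real.log (u + 1) + Real.log u := by
        have : j + 1 - 1 = j := rfl
        rw [this]
        simp only [D, ha]
        push_cast
        ring_nf
        rw [hu_def]
        ring_nf
      have h1 := Lr_le (u + 1) (by linarith)
      have h2 := Lr_ge u hu
      have h1' : ((j : ℝ) + 4) * (Real.log ((u + 1) + 2) - 2 * Real.log ((u + 1) + 1)
            + Real.log (u + 1)) ≤ ((j : ℝ) + 4) * (-(1 / ((u + 1) + 1) ^ 2)) := by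
        apply mul_le_mul_of_nonneg_left h1 (by positivity)
      have h2' : ((j : ℝ) + 1) * (-(1 / (u * (u + 2))))
          ≤ ((j : ℝ) + 1) * (Real.log (u + 2) - 2 * Real.log (u + 1) + Real.log u) := by
        apply mul_le_mul_of_nonneg_left h2 (by positivity)
      have key : ((j : ℝ) + 4) * (-(1 / ((u + 1) + 1) ^ 2))
          - ((j : ℝ) + 1) * (-(1 / (u * (u + 2)))) < 0 := by
        have hlt : ((j : ℝ) + 1) * (u + 2) ^ 2 < ((j : ℝ) + 4) * (u * (u + 2)) := by
          nlinarith [hu1, hu, Nat.cast_nonneg (α := ℝ) j]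
        have hd : ((j : ℝ) + 1) / (u * (u + 2)) < ((j : ℝ) + 4) / ((u + 2) ^ 2) := by
          rw [div_lt_div_iff₀ (by positivity) (by positivity)]
          nlinarith [hlt]
        have e : ((u : ℝ) + 1) + 1 = u + 2 := by ring
        rw [e]
        have e1 : ((j : ℝ) + 4) * (-(1 / (u + 2) ^ 2)) = -(((j : ℝ) + 4) / ((u + 2) ^ 2)) := by
          ring
        have e2 : ((j : ℝ) + 1) * (-(1 / (u * (u + 2)))) = -(((j : ℝ) + 1) / (u * (u + 2))) := by
          ring
        rw [e1, e2]
        linarith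
      rw [eL1, eL0] at *
      push_cast
      have ej : ((j : ℝ) + 1) + 3 = (j : ℝ) + 4 := by ring
      linarith [h1', h2', key]

/-- Combination identity. -/
lemma combine (L : ℕ → ℝ) (M' : ℕ) (x : ℝ) :
    3 * S L (M' + 1) x + (((M' : ℝ) + 1) * x) * S (D L) M' x
      = ∑ k ∈ Finset.range (M' + 2), (Nat.choose (M' + 1) k : ℝ)
          * (((k : ℝ) + 3) * L k - (k : ℝ) * L (k - 1)) * x ^ k * (1 - x) ^ (M' + 1 - k) := by
  have hsplit : ∑ k ∈ Finset.range (M' + 2), (Nat.choose (M' + 1) k : ℝ)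
        * (((k : ℝ) + 3) * L k - (k : ℝ) * L (k - 1)) * x ^ k * (1 - x) ^ (M' + 1 - k)
      = (∑ k ∈ Finset.range (M' + 2),
          3 * ((Nat.choose (M' + 1) k : ℝ) * L k * x ^ k * (1 - x) ^ (M' + 1 - k)))
        + ∑ k ∈ Finset.range (M' + 2), (Nat.choose (M' + 1) k : ℝ)
            * ((k : ℝ) * (L k - L (k - 1))) * x ^ k * (1 - x) ^ (M' + 1 - k) := by
    rw [← Finset.sum_add_distrib]
    refine Finset.sum_congr rfl fun k _ => ?_
    ring
  have hshift : ∑ k ∈ Finset.range (M' + 2), (Nat.choose (M' + 1) k : ℝ)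
        * ((k : ℝ) * (L k - L (k - 1))) * x ^ k * (1 - x) ^ (M' + 1 - k)
      = (((M' : ℝ) + 1) * x) * S (D L) M' x := by
    rw [Finset.sum_range_succ']
    simp only [Nat.cast_zero, zero_mul, mul_zero, add_zero]
    unfold S D
    rw [Finset.mul_sum]
    refine Finset.sum_congr rfl fun m _ => ?_
    have hc : ((M' : ℝ) + 1) * (Nat.choose M' m : ℝ)
        = (Nat.choose (M' + 1) (m + 1) : ℝ) * ((m : ℝ) + 1) := by
      exact_mod_cast Nat.add_one_mul_choose_eq M' m
    have e2 : M' + 1 - (m + 1) = M' - m := by omega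
    have e3 : m + 1 - 1 = m := rfl
    rw [e2, e3]
    push_cast
    have ex : x ^ (m + 1) = x * x ^ m := by ring
    rw [ex]
    linear_combination (-((L (m + 1) - L m) * (x * x ^ m) * (1 - x) ^ (M' - m))) * hc
  rw [hsplit, hshift]
  have h3 : 3 * S L (M' + 1) x
      = ∑ k ∈ Finset.range (M' + 2),
          3 * ((Nat.choose (M' + 1) k : ℝ) * L k * x ^ k * (1 - x) ^ (M' + 1 - k)) := by
    unfold S
    rw [Finset.mul_sum]
  rw [h3]

/-- Negativity of a Bernstein sum with negative coefficients on `[0,1]`. -/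
lemma bern_neg (M : ℕ) (x : ℝ) (hx0 : 0 ≤ x) (hx1 : x ≤ 1) (c : ℕ → ℝ)
    (hc : ∀ k, c k < 0) :
    ∑ k ∈ Finset.range (M + 1), (Nat.choose M k : ℝ) * c k * x ^ k * (1 - x) ^ (M - k) < 0 := by
  have hx1' : 0 ≤ 1 - x := by linarith
  have hw : ∀ k, 0 ≤ (Nat.choose M k : ℝ) * x ^ k * (1 - x) ^ (M - k) := fun k => by positivity
  have hsum1 : ∑ k ∈ Finset.range (M + 1), (Nat.choose M k : ℝ) * x ^ k * (1 - x) ^ (M - k)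
      = 1 := by
    have h := add_pow x (1 - x) M
    have hx : x + (1 - x) = 1 := by ring
    rw [hx, one_pow] at h
    calc ∑ k ∈ Finset.range (M + 1), (Nat.choose M k : ℝ) * x ^ k * (1 - x) ^ (M - k)
        = ∑ k ∈ Finset.range (M + 1), x ^ k * (1 - x) ^ (M - k) * (Nat.choose M k : ℝ) :=
          Finset.sum_congr rfl fun k _ => by ring
      _ = 1 := h.symm
  have hex : ∃ k ∈ Finset.range (M + 1),
      (0 : ℝ) < (Nat.choose M k : ℝ) * x ^ k * (1 - x) ^ (M - k) := by
    apply Finset.exists_lt_of_sum_lt (f := fun _ => (0 : ℝ))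
    rw [hsum1]
    simp
  obtain ⟨k0, hk0mem, hk0⟩ := hex
  have hlt : ∑ k ∈ Finset.range (M + 1), (Nat.choose M k : ℝ) * c k * x ^ k * (1 - x) ^ (M - k)
      < ∑ _k ∈ Finset.range (M + 1), (0 : ℝ) := by
    apply Finset.sum_lt_sum
    · intro k _
      have h1 := hw k
      have h2 := (hc k).le
      have e : (Nat.choose M k : ℝ) * c k * x ^ k * (1 - x) ^ (M - k)
          = c k * ((Nat.choose M k : ℝ) * x ^ k * (1 - x) ^ (M - k)) := by ring
      rw [e]
      exact mul_nonpos_of_nonpos_of_nonneg h2 h1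
    · refine ⟨k0, hk0mem, ?_⟩
      have e : (Nat.choose M k0 : ℝ) * c k0 * x ^ k0 * (1 - x) ^ (M - k0)
          = c k0 * ((Nat.choose M k0 : ℝ) * x ^ k0 * (1 - x) ^ (M - k0)) := by ring
      rw [e]
      exact mul_neg_of_neg_of_pos (hc k0) hk0
  simpa using hlt

end S13

/-- For every integer `n ≥ 3` and every `v ∈ [0, v̄]`: `3·J̃''(v) + v·J̃'''(v) < 0`. -/
theorem stmt13 (n : ℕ) (hn : 3 ≤ n) (ω₀ vbar : ℝ) (hω : 1 < ω₀) (hv : 0 < vbar) :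
    ∀ v ∈ Set.Icc (0 : ℝ) vbar,
      3 * deriv (deriv (Jt n ω₀ vbar)) v +
        v * deriv (deriv (deriv (Jt n ω₀ vbar))) v < 0 := by
  obtain ⟨M, rfl⟩ : ∃ M, n = M + 3 := ⟨n - 3, by omega⟩
  intro v hvmem
  obtain ⟨hv0, hv1⟩ := hvmem
  set a : ℕ → ℝ := fun m => Real.log ((m : ℝ) + ω₀) with ha_def
  have ha : ∀ m : ℕ, a m = Real.log ((m : ℝ) + ω₀) := fun m => rfl
  have hJ : Jt (M + 3) ω₀ vbar = fun w => S13.S a (M + 2) (w / vbar) := by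
    funext w
    simp only [Jt, S13.S, ha_def, show M + 3 - 1 = M + 2 by omega]
  have hF1 : ∀ w, HasDerivAt (Jt (M + 3) ω₀ vbar)
      ((((M + 1 : ℕ) : ℝ) + 1) * S13.S (S13.D a) (M + 1) (w / vbar) * (1 / vbar)) w := by
    intro w
    rw [hJ]
    exact S13.hasDerivAt_T vbar a (M + 1) w
  have hd1 : deriv (Jt (M + 3) ω₀ vbar)
      = fun w => (((M + 1 : ℕ) : ℝ) + 1) * S13.S (S13.D a) (M + 1) (w / vbar) * (1 / vbar) :=
    funext fun w => (hF1 w).deriv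
  have hF2 : ∀ w, HasDerivAt
      (fun w => (((M + 1 : ℕ) : ℝ) + 1) * S13.S (S13.D a) (M + 1) (w / vbar) * (1 / vbar))
      ((((M + 1 : ℕ) : ℝ) + 1) * ((((M : ℕ) : ℝ) + 1)
          * S13.S (S13.D (S13.D a)) M (w / vbar) * (1 / vbar)) * (1 / vbar)) w := by
    intro w
    exact ((S13.hasDerivAt_T vbar (S13.D a) M w).const_mul
      (((M + 1 : ℕ) : ℝ) + 1)).mul_const (1 / vbar)
  have hd2 : deriv (deriv (Jt (M + 3) ω₀ vbar))
      = fun w => (((M + 1 : ℕ) : ℝ) + 1) * ((((M : ℕ) : ℝ) + 1)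
          * S13.S (S13.D (S13.D a)) M (w / vbar) * (1 / vbar)) * (1 / vbar) := by
    rw [hd1]
    exact funext fun w => (hF2 w).deriv
  rcases M with _ | M'
  · -- n = 3 : third derivative vanishes
    have hc0 : (fun w : ℝ => (((0 + 1 : ℕ) : ℝ) + 1) * ((((0 : ℕ) : ℝ) + 1)
          * S13.S (S13.D (S13.D a)) 0 (w / vbar) * (1 / vbar)) * (1 / vbar))
        = fun _ : ℝ => (((0 + 1 : ℕ) : ℝ) + 1) * ((((0 : ℕ) : ℝ) + 1)
          * S13.D (S13.D a) 0 * (1 / vbar)) * (1 / vbar) := by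
      funext w
      rw [S13.S_zero]
    have h3v : deriv (deriv (deriv (Jt (0 + 3) ω₀ vbar))) v = 0 := by
      rw [hd2, hc0]
      exact deriv_const _ _
    have h2v : deriv (deriv (Jt (0 + 3) ω₀ vbar)) v
        = (((0 + 1 : ℕ) : ℝ) + 1) * ((((0 : ℕ) : ℝ) + 1)
          * S13.D (S13.D a) 0 * (1 / vbar)) * (1 / vbar) := by
      rw [hd2]
      simp only
      rw [S13.S_zero]
    rw [h2v, h3v]
    have hL0 : S13.D (S13.D a) 0 < 0 := by
      have h := S13.ck_neg ω₀ hω a ha 0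
      norm_num at h
      linarith
    have hiv : (0 : ℝ) < 1 / vbar := by positivity
    have hq : (0 : ℝ) < 1 / vbar * (1 / vbar) := mul_pos hiv hiv
    push_cast
    nlinarith [mul_pos hq (neg_pos.mpr hL0)]
  · -- n ≥ 4
    have hF3 : ∀ w, HasDerivAt
        (fun w => (((M' + 1 + 1 : ℕ) : ℝ) + 1) * ((((M' + 1 : ℕ) : ℝ) + 1)
            * S13.S (S13.D (S13.D a)) (M' + 1) (w / vbar) * (1 / vbar)) * (1 / vbar))
        ((((M' + 1 + 1 : ℕ) : ℝ) + 1) * (((((M' + 1 : ℕ) : ℝ) + 1)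
            * ((((M' : ℕ) : ℝ) + 1) * S13.S (S13.D (S13.D (S13.D a))) M' (w / vbar) * (1 / vbar)))
            * (1 / vbar)) * (1 / vbar)) w := by
      intro w
      exact ((((S13.hasDerivAt_T vbar (S13.D (S13.D a)) M' w).const_mul
        ((((M' + 1 : ℕ) : ℝ) + 1))).mul_const (1 / vbar)).const_mul
        ((((M' + 1 + 1 : ℕ) : ℝ) + 1))).mul_const (1 / vbar)
    have hd3 : deriv (deriv (deriv (Jt (M' + 1 + 3) ω₀ vbar)))
        = fun w => (((M' + 1 + 1 : ℕ) : ℝ) + 1) * (((((M' + 1 : ℕ) : ℝ) + 1)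
            * ((((M' : ℕ) : ℝ) + 1) * S13.S (S13.D (S13.D (S13.D a))) M' (w / vbar) * (1 / vbar)))
            * (1 / vbar)) * (1 / vbar) := by
      rw [hd2]
      exact funext fun w => (hF3 w).deriv
    rw [hd3, hd2]
    simp only
    have hx0 : 0 ≤ v / vbar := div_nonneg hv0 hv.le
    have hx1 : v / vbar ≤ 1 := by
      rw [div_le_one hv]
      exact hv1
    have hbern := S13.bern_neg (M' + 1) (v / vbar) hx0 hx1
      (fun k => ((k : ℝ) + 3) * S13.D (S13.D a) k - (k : ℝ) * S13.D (S13.D a) (k - 1))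
      (S13.ck_neg ω₀ hω a ha)
    have hcomb := S13.combine (S13.D (S13.D a)) M' (v / vbar)
    have hkey : 3 * S13.S (S13.D (S13.D a)) (M' + 1) (v / vbar)
        + (((M' : ℝ) + 1) * (v / vbar)) * S13.S (S13.D (S13.D (S13.D a))) M' (v / vbar) < 0 := by
      rw [hcomb]
      exact hbern
    have hpos : (0 : ℝ) < (((M' + 1 + 1 : ℕ) : ℝ) + 1) * ((((M' + 1 : ℕ) : ℝ) + 1)
        * (1 / vbar * (1 / vbar))) := by positivity
    refine lt_of_le_of_lt (le_of_eq ?_) (mul_neg_of_pos_of_neg hpos hkey)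
    ring
end

section
/- For all integers m ≥ 2 and all reals ω₀ > 1: (m+1)·ln(m+ω₀) − (m−2)·ln(m−3+ω₀) < 3·(m·ln(m−1+ω₀) − (m−1)·ln(m−2+ω₀)). -/
open Real

/-- For all integers `m ≥ 2` and all reals `ω₀ > 1`:
`(m+1)·ln(m+ω₀) − (m−2)·ln(m−3+ω₀) < 3·(m·ln(m−1+ω₀) − (m−1)·ln(m−2+ω₀))`. -/
theorem stmt14 (m : ℕ) (hm : 2 ≤ m) (ω₀ : ℝ) (hω : 1 < ω₀) :
    ((m : ℝ) + 1) * Real.log ((m : ℝ) + ω₀) -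
      ((m : ℝ) - 2) * Real.log ((m : ℝ) - 3 + ω₀) <
    3 * ((m : ℝ) * Real.log ((m : ℝ) - 1 + ω₀) -
      ((m : ℝ) - 1) * Real.log ((m : ℝ) - 2 + ω₀)) := by
  set G : ℝ → ℝ := fun x => (x + 1) * Real.log (x + ω₀) - x * Real.log (x - 1 + ω₀) with hGdef
  set G1 : ℝ → ℝ := fun x =>
      (Real.log (x + ω₀) + (x + 1) * (1 / (x + ω₀))) -
        (Real.log (x - 1 + ω₀) + x * (1 / (x - 1 + ω₀))) with hG1def
  have hpos : ∀ x : ℝ, x ∈ Set.Ici (0:ℝ) → 0 < x - 1 + ω₀ ∧ 0 < x + ω₀ := by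
    intro x hx
    simp only [Set.mem_Ici] at hx
    constructor <;> linarith
  -- first derivative on Ioi 0
  have hD1 : ∀ x ∈ Set.Ioi (0:ℝ), HasDerivAt G (G1 x) x := by
    intro x hx
    have hb : (0:ℝ) < x - 1 + ω₀ := by simp only [Set.mem_Ioi] at hx; linarith
    have ha : (0:ℝ) < x + ω₀ := by simp only [Set.mem_Ioi] at hx; linarith
    have l1 : HasDerivAt (fun x : ℝ => Real.log (x + ω₀)) (1 / (x + ω₀)) x := by
      simpa using ((hasDerivAt_id x).add_const ω₀).log ha.ne'
    have l2 : HasDerivAt (fun x : ℝ => Real.log (x - 1 + ω₀)) (1 / (x - 1 + ω₀)) x := by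
      have : HasDerivAt (fun x : ℝ => x - 1 + ω₀) 1 x := by
        simpa using ((hasDerivAt_id x).sub_const 1).add_const ω₀
      simpa using this.log hb.ne'
    have p1 : HasDerivAt (fun x : ℝ => (x + 1) * Real.log (x + ω₀))
        (1 * Real.log (x + ω₀) + (x + 1) * (1 / (x + ω₀))) x :=
      ((hasDerivAt_id x).add_const 1).mul l1
    have p2 : HasDerivAt (fun x : ℝ => x * Real.log (x - 1 + ω₀))
        (1 * Real.log (x - 1 + ω₀) + x * (1 / (x - 1 + ω₀))) x :=
      (hasDerivAt_id x).mul l2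
    have := p1.sub p2
    refine this.congr_deriv ?_
    simp only [hG1def]
    ring
  -- second derivative
  set G2 : ℝ → ℝ := fun x =>
      (1 / (x + ω₀) + (ω₀ - 1) / (x + ω₀) ^ 2) -
        (1 / (x - 1 + ω₀) + (ω₀ - 1) / (x - 1 + ω₀) ^ 2) with hG2def
  have hD2 : ∀ x ∈ Set.Ioi (0:ℝ), HasDerivAt G1 (G2 x) x := by
    intro x hx
    have hb : (0:ℝ) < x - 1 + ω₀ := by simp only [Set.mem_Ioi] at hx; linarith
    have ha : (0:ℝ) < x + ω₀ := by simp only [Set.mem_Ioi] at hx; linarith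
    have l1 : HasDerivAt (fun x : ℝ => Real.log (x + ω₀)) (1 / (x + ω₀)) x := by
      simpa using ((hasDerivAt_id x).add_const ω₀).log ha.ne'
    have hb' : HasDerivAt (fun x : ℝ => x - 1 + ω₀) 1 x := by
      simpa using ((hasDerivAt_id x).sub_const 1).add_const ω₀
    have l2 : HasDerivAt (fun x : ℝ => Real.log (x - 1 + ω₀)) (1 / (x - 1 + ω₀)) x := by
      simpa using hb'.log hb.ne'
    have q1 : HasDerivAt (fun x : ℝ => (x + 1) * (1 / (x + ω₀)))
        (((1 : ℝ) * (x + ω₀) - (x + 1) * 1) / (x + ω₀) ^ 2) x := by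
      have := ((hasDerivAt_id x).add_const 1).div ((hasDerivAt_id x).add_const ω₀) ha.ne'
      simpa [div_eq_mul_inv, mul_comm, Pi.mul_def, Pi.inv_def, Pi.div_def] using this
    have q2 : HasDerivAt (fun x : ℝ => x * (1 / (x - 1 + ω₀)))
        (((1 : ℝ) * (x - 1 + ω₀) - x * 1) / (x - 1 + ω₀) ^ 2) x := by
      have := (hasDerivAt_id x).div hb' hb.ne'
      simpa [div_eq_mul_inv, mul_comm, Pi.mul_def, Pi.inv_def, Pi.div_def] using this
    have := (l1.add q1).sub (l2.add q2)
    refine this.congr_deriv ?_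
    simp only [hG2def]
    have r1 : (1:ℝ) * (x + ω₀) - (x + 1) * 1 = ω₀ - 1 := by ring
    have r2 : (1:ℝ) * (x - 1 + ω₀) - x * 1 = ω₀ - 1 := by ring
    rw [r1, r2]
  -- strict concavity of G on Ici 0
  have hconc : StrictConcaveOn ℝ (Set.Ici (0:ℝ)) G := by
    apply strictConcaveOn_of_deriv2_neg (convex_Ici 0)
    · -- continuity
      apply ContinuousOn.sub
      · exact ((continuous_id.add continuous_const).continuousOn).mul
          (ContinuousOn.log ((continuous_id.add continuous_const).continuousOn)
            (fun x hx => (hpos x hx).2.ne'))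
      · exact continuous_id.continuousOn.mul
          (ContinuousOn.log (((continuous_id.sub continuous_const).add continuous_const).continuousOn)
            (fun x hx => (hpos x hx).1.ne'))
    · intro x hx
      rw [interior_Ici] at hx
      have hmem : Set.Ioi (0:ℝ) ∈ nhds x := isOpen_Ioi.mem_nhds hx
      have e1 : deriv G =ᶠ[nhds x] G1 :=
        Filter.eventuallyEq_of_mem hmem (fun y hy => (hD1 y hy).deriv)
      have e2 : deriv^[2] G x = G2 x := by
        show deriv (deriv G) x = G2 x
        rw [e1.deriv_eq]
        exact (hD2 x hx).deriv
      rw [e2]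
      have hb : (0:ℝ) < x - 1 + ω₀ := by simp only [Set.mem_Ioi] at hx; linarith
      have ha : (0:ℝ) < x + ω₀ := by simp only [Set.mem_Ioi] at hx; linarith
      have hlt : x - 1 + ω₀ < x + ω₀ := by linarith
      have h1 : 1 / (x + ω₀) < 1 / (x - 1 + ω₀) := by
        apply one_div_lt_one_div_of_lt hb hlt
      have h2 : (ω₀ - 1) / (x + ω₀) ^ 2 < (ω₀ - 1) / (x - 1 + ω₀) ^ 2 := by
        apply div_lt_div_of_pos_left (by linarith) (by positivity)
        exact pow_lt_pow_left₀ hlt hb.le (by norm_num)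
      simp only [hG2def]
      linarith
  -- apply strict concavity at m-2, m with midpoint m-1
  have hx2 : ((m:ℝ) - 2) ∈ Set.Ici (0:ℝ) := by
    simp only [Set.mem_Ici]
    have : (2:ℝ) ≤ (m:ℝ) := by exact_mod_cast hm
    linarith
  have hx0 : ((m:ℝ)) ∈ Set.Ici (0:ℝ) := by
    simp only [Set.mem_Ici]; positivity
  have hne : ((m:ℝ) - 2) ≠ (m:ℝ) := by intro h; linarith [h]
  have key := hconc.2 hx2 hx0 hne (by norm_num : (0:ℝ) < 1/2) (by norm_num : (0:ℝ) < 1/2)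
    (by norm_num)
  rw [smul_eq_mul, smul_eq_mul, smul_eq_mul, smul_eq_mul] at key
  have hmid : (1/2 : ℝ) * ((m:ℝ) - 2) + (1/2 : ℝ) * (m:ℝ) = (m:ℝ) - 1 := by ring
  rw [hmid] at key
  -- unfold G at the three points
  have eG2 : G ((m:ℝ) - 2) = ((m:ℝ) - 1) * Real.log ((m:ℝ) - 2 + ω₀)
      - ((m:ℝ) - 2) * Real.log ((m:ℝ) - 3 + ω₀) := by
    simp only [hGdef]
    have a1 : ((m:ℝ) - 2) + ω₀ = (m:ℝ) - 2 + ω₀ := by ring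
    have a2 : ((m:ℝ) - 2) - 1 + ω₀ = (m:ℝ) - 3 + ω₀ := by ring
    rw [a1, a2]; ring
  have eG1 : G ((m:ℝ) - 1) = (m:ℝ) * Real.log ((m:ℝ) - 1 + ω₀)
      - ((m:ℝ) - 1) * Real.log ((m:ℝ) - 2 + ω₀) := by
    simp only [hGdef]
    have a1 : ((m:ℝ) - 1) + ω₀ = (m:ℝ) - 1 + ω₀ := by ring
    have a2 : ((m:ℝ) - 1) - 1 + ω₀ = (m:ℝ) - 2 + ω₀ := by ring
    rw [a1, a2]; ring
  have eG0 : G ((m:ℝ)) = ((m:ℝ) + 1) * Real.log ((m:ℝ) + ω₀)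
      - (m:ℝ) * Real.log ((m:ℝ) - 1 + ω₀) := by
    simp only [hGdef]
  rw [eG2, eG1, eG0] at key
  linarith
end
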